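/- arXiv:0908.2475 — 6 statements merged into one kernel-verified Lean document; each statement's English description precedes it below -/
import Mathlib

section
/- If E₁ and E₂ are effects on a complex Hilbert space H (operators with 0 ≤ Eᵢ ≤ I) satisfying E₁² + E₂² = I, then E₁ and E₂ commute. -/
set_option synthInstance.maxHeartbeats 1000000
set_option maxHeartbeats 1000000

open StarAlgebra in
/-- Anything commuting with `a` and `star a` commutes with every element of the elemental
star algebra generated by `a`. -/
lemma commute_of_mem_elemental_aux {A : Type*} [CStarAlgebra A] {a b y : A}
    (h : Commute b a) (hstar : Commute b (star a)) (hy : y ∈ elemental ℂ a) :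
    Commute b y := by
  induction hy using elemental.induction_on with
  | self => exact h
  | star_self => exact hstar
  | algebraMap r => exact (Algebra.commutes r b).symm
  | add u hu v hv pu pv => exact pu.add_right pv
  | mul u hu v hv pu pv => exact pu.mul_right pv
  | closure s hs hmem v hv =>
    have hclosed : IsClosed {x : A | b * x = x * b} :=
      isClosed_eq (continuous_mul_left b) (continuous_mul_right b)
    exact closure_minimal (fun u hu => hmem u hu) hclosed hv

open StarAlgebra in
lemma commute_cfc_of_commute {A : Type*} [CStarAlgebra A] {a b : A} [ha : IsStarNormal a]
    (h : Commute b a) (hstar : Commute b (star a)) (f : ℂ → ℂ) :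
    Commute b (cfc f a) := by
  by_cases hf : ContinuousOn f (spectrum ℂ a)
  · rw [cfc_apply f a ha hf]
    refine commute_of_mem_elemental_aux h hstar ?_
    rw [cfcHom_eq_of_isStarNormal]
    exact Subtype.coe_prop _
  · rw [cfc_apply_of_not_continuousOn a hf]
    exact Commute.zero_right b

/-- If two effects on a complex Hilbert space satisfy `E₁² + E₂² = I`, they commute. -/
theorem luders_two_effects_commute {H : Type*} [NormedAddCommGroup H] [InnerProductSpace ℂ H]
    [CompleteSpace H] (E₁ E₂ : H →L[ℂ] H)
    (h₁ : 0 ≤ E₁) (h₁' : E₁ ≤ 1) (h₂ : 0 ≤ E₂) (h₂' : E₂ ≤ 1)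
    (hsum : E₁ * E₁ + E₂ * E₂ = 1) :
    E₁ * E₂ = E₂ * E₁ := by
  have h2sq : E₂ * E₂ = 1 - E₁ * E₁ := eq_sub_of_add_eq' hsum
  have hA : Commute E₁ (E₂ * E₂) := by
    rw [h2sq]
    exact (Commute.one_right E₁).sub_right ((Commute.refl E₁).mul_right (Commute.refl E₁))
  have hsa₂ : IsSelfAdjoint E₂ := .of_nonneg h₂
  have hpos : (0 : H →L[ℂ] H) ≤ E₂ * E₂ := by
    simpa [hsa₂.star_eq] using star_mul_self_nonneg E₂
  have hE₂ : CFC.sqrt (E₂ * E₂) = E₂ := CFC.sqrt_unique rfl h₂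
  have hsa : IsSelfAdjoint (E₂ * E₂) := .of_nonneg hpos
  have hstar : Commute E₁ (star (E₂ * E₂)) := by rwa [hsa.star_eq]
  have hcfc : CFC.sqrt (E₂ * E₂) =
      cfc (fun x : ℂ ↦ ((NNReal.sqrt x.re.toNNReal : ℝ) : ℂ)) (E₂ * E₂) := by
    rw [CFC.sqrt, cfcₙ_eq_cfc, cfc_nnreal_eq_real _ _ hpos, cfc_real_eq_complex _ hsa]
  have hnormal : IsStarNormal (E₂ * E₂) := hsa.isStarNormal
  have : Commute E₁ E₂ := by
    rw [← hE₂, hcfc]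
    exact commute_cfc_of_commute hA hstar _
  exact this
end

section
/- Let E₁,...,E_n be pairwise commuting effects on a complex Hilbert space H and B ∈ B(H). If B fails to commute with some E_{i₀}, then there exist a positive integer m and integer tuples (k₁,...,k_n), (k'₁,...,k'_n) with k_i ≠ k'_i for at least one i, such that F^m_{k₁,...,k_n} B F^m_{k'₁,...,k'_n} ≠ 0, where F^m_{k₁,...,k_n} = ∏_{i=1}^n P^{E_i}((k_i/m,(k_i+1)/m]). -/
/-- A projection-valued (spectral) measure for the operator `A`. -/
structure IsSpectralMeasure {H : Type*} [NormedAddCommGroup H] [InnerProductSpace ℂ H]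
    [CompleteSpace H] (A : H →L[ℂ] H) (P : Set ℝ → H →L[ℂ] H) : Prop where
  isIdem : ∀ s, IsIdempotentElem (P s)
  selfAdj : ∀ s, IsSelfAdjoint (P s)
  empty : P ∅ = 0
  univ : P Set.univ = 1
  inter : ∀ s t, P (s ∩ t) = P s * P t
  hasSum : ∀ (s : ℕ → Set ℝ), Pairwise (Function.onFun Disjoint s) →
    ∀ x, HasSum (fun n => P (s n) x) (P (⋃ n, s n) x)
  commutes : ∀ s, A * P s = P s * A
  smul_le : ∀ a b : ℝ, (a : ℂ) • P (Set.Ioc a b) ≤ P (Set.Ioc a b) * A * P (Set.Ioc a b)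
  le_smul : ∀ a b : ℝ, P (Set.Ioc a b) * A * P (Set.Ioc a b) ≤ (b : ℂ) • P (Set.Ioc a b)

/-- The product of spectral projections `F^m_{k₁,…,k_n} = ∏ᵢ P^{Eᵢ}((kᵢ/m,(kᵢ+1)/m])`. -/
noncomputable def Fproj {H : Type*} [NormedAddCommGroup H] [InnerProductSpace ℂ H]
    [CompleteSpace H] {n : ℕ} (P : Fin n → Set ℝ → H →L[ℂ] H) (m : ℕ) (k : Fin n → ℤ) :
    H →L[ℂ] H :=
  (List.ofFn fun i => P i (Set.Ioc ((k i : ℝ) / m) (((k i : ℝ) + 1) / m))).prod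


section Aux

variable {H : Type*} [NormedAddCommGroup H] [InnerProductSpace ℂ H] [CompleteSpace H]

lemma smul_nonneg2 (c : ℝ) (hc : 0 ≤ c) {a : H →L[ℂ] H} (ha : 0 ≤ a) :
    (0 : H →L[ℂ] H) ≤ (c:ℂ) • a := by
  have ha' : a.IsPositive := (ContinuousLinearMap.nonneg_iff_isPositive a).1 ha
  have hsa : IsSelfAdjoint ((c:ℂ) • a) := by
    rw [IsSelfAdjoint, star_smul, Complex.star_def, Complex.conj_ofReal, ha'.isSelfAdjoint.star_eq]
  have : ((c:ℂ) • a).IsPositive := by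
    refine ContinuousLinearMap.isPositive_def'.2 ⟨hsa, fun x => ?_⟩
    have := ha'.2 x
    simp only [ContinuousLinearMap.reApplyInnerSelf, ContinuousLinearMap.smul_apply,
      inner_smul_left, Complex.conj_ofReal] at *
    simp only [RCLike.re_to_complex] at this ⊢
    rw [Complex.re_ofReal_mul]
    exact mul_nonneg hc this
  exact (ContinuousLinearMap.nonneg_iff_isPositive _).2 this

lemma proj_nonneg {p : H →L[ℂ] H} (hi : IsIdempotentElem p) (hs : IsSelfAdjoint p) :
    (0 : H →L[ℂ] H) ≤ p := by
  have : p = star p * p := by rw [hs.star_eq, hi.eq]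
  rw [this]; exact star_mul_self_nonneg p

lemma proj_le_one {p : H →L[ℂ] H} (hi : IsIdempotentElem p) (hs : IsSelfAdjoint p) : p ≤ 1 := by
  rw [← sub_nonneg]
  exact proj_nonneg hi.one_sub ((IsSelfAdjoint.one _).sub hs)

lemma norm_le_of_le_smul_one {X : H →L[ℂ] H} {c : ℝ} (hc : 0 ≤ c) (h0 : 0 ≤ X)
    (h1 : X ≤ (c:ℂ) • 1) : ‖X‖ ≤ c := by
  refine le_trans (CStarAlgebra.norm_le_norm_of_nonneg_of_le h0 h1) ?_
  rw [norm_smul]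
  calc ‖(c:ℂ)‖ * ‖(1 : H →L[ℂ] H)‖ ≤ ‖(c:ℂ)‖ * 1 :=
        mul_le_mul_of_nonneg_left
          (by rw [ContinuousLinearMap.one_def]; exact ContinuousLinearMap.norm_id_le)
          (norm_nonneg _)
    _ = c := by simp [abs_of_nonneg hc]

lemma norm_proj_apply_le {p : H →L[ℂ] H} (hi : IsIdempotentElem p) (hs : IsSelfAdjoint p)
    (x : H) : ‖p x‖ ≤ ‖x‖ := by
  have h : ‖p‖ ≤ 1 := norm_le_of_le_smul_one zero_le_one (proj_nonneg hi hs)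
    (by simpa using proj_le_one hi hs)
  calc ‖p x‖ ≤ ‖p‖ * ‖x‖ := p.le_opNorm x
    _ ≤ 1 * ‖x‖ := mul_le_mul_of_nonneg_right h (norm_nonneg _)
    _ = ‖x‖ := one_mul _

variable {A : H →L[ℂ] H} {Pm : Set ℝ → H →L[ℂ] H}

lemma SM.add (hp : IsSpectralMeasure A Pm) {s t : Set ℝ} (h : Disjoint s t) :
    Pm (s ∪ t) = Pm s + Pm t := by
  ext x
  set f : ℕ → Set ℝ := fun n => if n = 0 then s else if n = 1 then t else ∅ with hf
  have hdis : Pairwise (Function.onFun Disjoint f) := by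
    intro i j hij
    simp only [Function.onFun, hf]
    split_ifs with h1 h2 h3 h4 h5 h6 <;>
      first
        | omega
        | exact h
        | exact h.symm
        | exact Set.disjoint_empty _
        | exact Set.empty_disjoint _
  have key := hp.hasSum f hdis x
  have huni : (⋃ n, f n) = s ∪ t := by
    ext y
    simp only [Set.mem_iUnion, Set.mem_union, hf]
    constructor
    · rintro ⟨n, hn⟩
      split_ifs at hn with h1 h2
      · exact Or.inl hn
      · exact Or.inr hn
      · exact absurd hn (Set.notMem_empty y)
    · rintro (hy | hy)
      exacts [⟨0, by simp [hy]⟩, ⟨1, by simp [hy]⟩]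
  rw [huni] at key
  have h01 : (0:ℕ) ≠ 1 := by norm_num
  have key2 : HasSum (fun n => Pm (f n) x) (∑ n ∈ ({0, 1} : Finset ℕ), Pm (f n) x) := by
    refine hasSum_sum_of_ne_finset_zero fun n hn => ?_
    simp only [Finset.mem_insert, Finset.mem_singleton, not_or] at hn
    simp [hf, hn.1, hn.2, hp.empty]
  rw [Finset.sum_pair h01] at key2
  have := key.unique key2
  simpa [hf] using this

lemma SM.iUnion_null (hp : IsSpectralMeasure A Pm) {s : ℕ → Set ℝ}
    (hd : Pairwise (Function.onFun Disjoint s)) (h0 : ∀ j, Pm (s j) = 0) :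
    Pm (⋃ j, s j) = 0 := by
  ext x
  have key := hp.hasSum s hd x
  simp only [h0, ContinuousLinearMap.zero_apply] at key
  simpa using (hasSum_zero.unique key).symm

lemma SM.Ioc_null_neg (hp : IsSpectralMeasure A Pm) (hA0 : 0 ≤ A) {a b : ℝ} (hb : b < 0) :
    Pm (Set.Ioc a b) = 0 := by
  set p := Pm (Set.Ioc a b) with hpdef
  have h0 : (0 : H →L[ℂ] H) ≤ p := proj_nonneg (hp.isIdem _) (hp.selfAdj _)
  have hle : p * A * p ≤ (b:ℂ) • p := hp.le_smul a b
  have hge : (0 : H →L[ℂ] H) ≤ p * A * p := by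
    have := star_left_conjugate_nonneg hA0 p
    rwa [(hp.selfAdj _).star_eq] at this
  have h1 : (0 : H →L[ℂ] H) ≤ (b:ℂ) • p := le_trans hge hle
  have h2 : (0 : H →L[ℂ] H) ≤ ((-b : ℝ):ℂ) • p := smul_nonneg2 _ (by linarith) h0
  have h2' : (b:ℂ) • p ≤ 0 := by
    rw [← neg_nonneg, ← neg_smul]
    simpa using h2
  have h3 : ((b:ℝ):ℂ) • p = 0 := le_antisymm h2' h1
  have hbne : ((b:ℝ):ℂ) ≠ 0 := by exact_mod_cast hb.ne
  have : p = ((b:ℝ):ℂ)⁻¹ • (((b:ℝ):ℂ) • p) := by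
    rw [smul_smul, inv_mul_cancel₀ hbne, one_smul]
  rw [this, h3, smul_zero]

lemma SM.Ioc_null_gt_one (hp : IsSpectralMeasure A Pm) (hA1 : A ≤ 1) {a b : ℝ} (ha : 1 < a) :
    Pm (Set.Ioc a b) = 0 := by
  set p := Pm (Set.Ioc a b) with hpdef
  have h0 : (0 : H →L[ℂ] H) ≤ p := proj_nonneg (hp.isIdem _) (hp.selfAdj _)
  have hge : (a:ℂ) • p ≤ p * A * p := hp.smul_le a b
  have hle : p * A * p ≤ p := by
    have := star_left_conjugate_le_conjugate hA1 p
    rwa [(hp.selfAdj _).star_eq, mul_one, (hp.isIdem _).eq] at this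
  have h1 : (a:ℂ) • p ≤ p := le_trans hge hle
  have h1' : (0 : H →L[ℂ] H) ≤ ((1 - a : ℝ):ℂ) • p := by
    rw [← sub_nonneg] at h1
    have : ((1 - a : ℝ):ℂ) • p = p - (a:ℂ) • p := by
      push_cast
      rw [sub_smul, one_smul]
    rw [this]
    exact h1
  have h2 : (0 : H →L[ℂ] H) ≤ ((a - 1 : ℝ):ℂ) • p := smul_nonneg2 _ (by linarith) h0
  have h2' : ((1 - a : ℝ):ℂ) • p ≤ 0 := by
    rw [← neg_nonneg, ← neg_smul]
    have : -((1 - a : ℝ):ℂ) = ((a - 1 : ℝ):ℂ) := by push_cast; ring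
    rw [this]
    exact h2
  have h3 : ((1 - a : ℝ):ℂ) • p = 0 := le_antisymm h2' h1'
  have hne : ((1 - a : ℝ):ℂ) ≠ 0 := by
    simp only [ne_eq, Complex.ofReal_eq_zero]
    linarith
  have : p = ((1 - a : ℝ):ℂ)⁻¹ • (((1 - a : ℝ):ℂ) • p) := by
    rw [smul_smul, inv_mul_cancel₀ hne, one_smul]
  rw [this, h3, smul_zero]

lemma SM.Iic_null (hp : IsSpectralMeasure A Pm) (hA0 : 0 ≤ A) {c : ℝ} (hc : c < 0) :
    Pm (Set.Iic c) = 0 := by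
  have huni : (⋃ j : ℕ, Set.Ioc (c - (j+1)) (c - j)) = Set.Iic c := by
    ext x
    simp only [Set.mem_iUnion, Set.mem_Ioc, Set.mem_Iic]
    constructor
    · rintro ⟨j, _, h2⟩
      have : (0:ℝ) ≤ j := Nat.cast_nonneg j
      linarith
    · intro hx
      refine ⟨⌊c - x⌋₊, ?_, ?_⟩
      · have := Nat.lt_floor_add_one (c - x)
        linarith
      · have := Nat.floor_le (by linarith : (0:ℝ) ≤ c - x)
        linarith
  have hdis : Pairwise (Function.onFun Disjoint (fun j : ℕ => Set.Ioc (c - (j+1)) (c - j))) := by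
    intro i j hij
    simp only [Function.onFun]
    rw [Set.Ioc_disjoint_Ioc]
    rcases lt_or_gt_of_ne hij with hlt | hlt
    · have : (i:ℝ) + 1 ≤ j := by exact_mod_cast hlt
      refine le_trans (min_le_right _ _) (le_trans ?_ (le_max_left _ _))
      linarith
    · have : (j:ℝ) + 1 ≤ i := by exact_mod_cast hlt
      refine le_trans (min_le_left _ _) (le_trans ?_ (le_max_right _ _))
      linarith
  rw [← huni]
  exact SM.iUnion_null hp hdis fun j => SM.Ioc_null_neg hp hA0
    (by have : (0:ℝ) ≤ j := Nat.cast_nonneg j; linarith)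

lemma SM.Ioi_null (hp : IsSpectralMeasure A Pm) (hA1 : A ≤ 1) {c : ℝ} (hc : 1 < c) :
    Pm (Set.Ioi c) = 0 := by
  have huni : (⋃ j : ℕ, Set.Ioc (c + j) (c + j + 1)) = Set.Ioi c := by
    ext x
    simp only [Set.mem_iUnion, Set.mem_Ioc, Set.mem_Ioi]
    constructor
    · rintro ⟨j, h1, _⟩
      have : (0:ℝ) ≤ j := Nat.cast_nonneg j
      linarith
    · intro hx
      set t := x - c with ht
      have ht0 : 0 < t := by simp [ht]; linarith
      have h1 : 1 ≤ ⌈t⌉₊ := Nat.one_le_ceil_iff.2 ht0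
      have hcast : ((⌈t⌉₊ - 1 : ℕ) : ℝ) = (⌈t⌉₊ : ℝ) - 1 := by
        push_cast [h1]; ring
      refine ⟨⌈t⌉₊ - 1, ?_, ?_⟩
      · have hlt : (⌈t⌉₊ : ℝ) < t + 1 := Nat.ceil_lt_add_one ht0.le
        rw [hcast]; linarith
      · have hle : t ≤ (⌈t⌉₊ : ℝ) := Nat.le_ceil t
        rw [hcast]; linarith
  have hdis : Pairwise (Function.onFun Disjoint (fun j : ℕ => Set.Ioc (c + j) (c + j + 1))) := by
    intro i j hij
    simp only [Function.onFun]
    rw [Set.Ioc_disjoint_Ioc]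
    rcases lt_or_gt_of_ne hij with hlt | hlt
    · have : (i:ℝ) + 1 ≤ j := by exact_mod_cast hlt
      refine le_trans (min_le_left _ _) (le_trans ?_ (le_max_right _ _))
      linarith
    · have : (j:ℝ) + 1 ≤ i := by exact_mod_cast hlt
      refine le_trans (min_le_right _ _) (le_trans ?_ (le_max_left _ _))
      linarith
  rw [← huni]
  refine SM.iUnion_null hp hdis fun j => SM.Ioc_null_gt_one hp hA1 ?_
  have : (0:ℝ) ≤ j := Nat.cast_nonneg j
  linarith

lemma SM.telescope (hp : IsSpectralMeasure A Pm) {m : ℕ} (hm : 0 < m) (N : ℕ) :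
    ∑ i ∈ Finset.range N, Pm (Set.Ioc (((i:ℝ) - 1)/m) (((i:ℝ) - 1 + 1)/m))
      = Pm (Set.Ioc ((-1:ℝ)/m) (((N:ℝ) - 1)/m)) := by
  have hm' : (0:ℝ) < m := by exact_mod_cast hm
  induction N with
  | zero =>
    have : ((0:ℕ):ℝ) - 1 = -1 := by norm_num
    rw [Finset.sum_range_zero, this, Set.Ioc_self, hp.empty]
  | succ N ih =>
    rw [Finset.sum_range_succ, ih]
    have hN0 : (0:ℝ) ≤ (N:ℝ) := Nat.cast_nonneg N
    have h1 : (-1:ℝ)/m ≤ ((N:ℝ)-1)/m := by gcongr; linarith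
    have h2 : ((N:ℝ)-1)/m ≤ ((N:ℝ)-1+1)/m := by gcongr; linarith
    have hdis : Disjoint (Set.Ioc ((-1:ℝ)/m) (((N:ℝ)-1)/m))
        (Set.Ioc (((N:ℝ)-1)/m) (((N:ℝ)-1+1)/m)) := Set.Ioc_disjoint_Ioc_of_le le_rfl
    rw [← SM.add hp hdis, Set.Ioc_union_Ioc_eq_Ioc h1 h2]
    have : ((N:ℝ) - 1 + 1) = (((N+1:ℕ)):ℝ) - 1 := by push_cast; ring
    rw [this]

lemma SM.resolution (hp : IsSpectralMeasure A Pm) (hA0 : 0 ≤ A) (hA1 : A ≤ 1)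
    {m : ℕ} (hm : 0 < m) :
    ∑ j ∈ Finset.Icc (-1 : ℤ) (m:ℤ), Pm (Set.Ioc ((j:ℝ)/m) (((j:ℝ)+1)/m)) = 1 := by
  have hm' : (0:ℝ) < m := by exact_mod_cast hm
  have hinj : Function.Injective (fun i : ℕ => (i:ℤ) - 1) := by intro a b h; dsimp at h; omega
  have hmap : Finset.Icc (-1 : ℤ) (m:ℤ) =
      Finset.map ⟨fun i : ℕ => (i:ℤ) - 1, hinj⟩
        (Finset.range (m+2)) := by
    ext a
    simp only [Finset.mem_Icc, Finset.mem_map, Finset.mem_range, Function.Embedding.coeFn_mk]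
    constructor
    · rintro ⟨h1, h2⟩
      exact ⟨(a+1).toNat, by omega, by omega⟩
    · rintro ⟨i, hi, rfl⟩
      omega
  rw [hmap, Finset.sum_map]
  simp only [Function.Embedding.coeFn_mk]
  have hcongr : ∀ i ∈ Finset.range (m+2),
      Pm (Set.Ioc ((((i:ℤ) - 1 : ℤ):ℝ)/m) (((((i:ℤ)-1:ℤ):ℝ)+1)/m))
        = Pm (Set.Ioc (((i:ℝ)-1)/m) (((i:ℝ)-1+1)/m)) := by
    intro i _
    congr 1
    congr 1 <;> push_cast <;> ring
  rw [Finset.sum_congr rfl hcongr, SM.telescope hp hm (m+2)]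
  set c := (-1:ℝ)/m with hc
  set d := ((((m+2:ℕ)):ℝ)-1)/m with hd
  have hcd : c ≤ d := by
    rw [hc, hd]
    gcongr
    push_cast; linarith
  have hc0 : c < 0 := by
    rw [hc]
    exact div_neg_of_neg_of_pos (by norm_num) hm'
  have hd1 : 1 < d := by
    rw [hd, lt_div_iff₀ hm']
    push_cast; linarith
  have hIic : Pm (Set.Iic c) = 0 := SM.Iic_null hp hA0 hc0
  have hIoi : Pm (Set.Ioi d) = 0 := SM.Ioi_null hp hA1 hd1
  have hdis1 : Disjoint (Set.Ioc c d) (Set.Ioi d) :=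
    (Set.Iic_disjoint_Ioi le_rfl).mono_left Set.Ioc_subset_Iic_self
  have hdis2 : Disjoint (Set.Iic c) (Set.Ioc c d ∪ Set.Ioi d) := by
    rw [Set.Ioc_union_Ioi_eq_Ioi hcd]
    exact Set.Iic_disjoint_Ioi le_rfl
  have huniv : (Set.univ : Set ℝ) = Set.Iic c ∪ (Set.Ioc c d ∪ Set.Ioi d) := by
    rw [Set.Ioc_union_Ioi_eq_Ioi hcd, Set.Iic_union_Ioi]
  have : (1 : H →L[ℂ] H) = Pm (Set.Iic c) + (Pm (Set.Ioc c d) + Pm (Set.Ioi d)) := by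
    rw [← SM.add hp hdis1, ← SM.add hp hdis2, ← huniv, hp.univ]
  rw [hIic, hIoi] at this
  simp only [zero_add, add_zero] at this
  exact this.symm

lemma inner_proj_move {Q : H →L[ℂ] H} (hQ : IsSelfAdjoint Q) (u z : H) :
    inner ℂ (Q u) z = inner ℂ u (Q z) := by
  conv_lhs => rw [← (ContinuousLinearMap.isSelfAdjoint_iff'.mp hQ)]
  exact ContinuousLinearMap.adjoint_inner_left Q z u

lemma pythagoras_proj {ι : Type*} (s : Finset ι) (Q : ι → H →L[ℂ] H)
    (hsa : ∀ i, IsSelfAdjoint (Q i))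
    (horth : ∀ i ∈ s, ∀ j ∈ s, i ≠ j → Q i * Q j = 0)
    (w : ι → H) :
    ‖∑ i ∈ s, Q i (w i)‖^2 = ∑ i ∈ s, ‖Q i (w i)‖^2 := by
  have expand : inner ℂ (∑ i ∈ s, Q i (w i)) (∑ j ∈ s, Q j (w j))
      = ∑ i ∈ s, inner ℂ (Q i (w i)) (Q i (w i)) := by
    rw [sum_inner]
    refine Finset.sum_congr rfl fun i hi => ?_
    rw [inner_sum]
    refine Finset.sum_eq_single_of_mem i hi fun j hj hne => ?_
    rw [inner_proj_move (hsa i)]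
    have : Q i (Q j (w j)) = (Q i * Q j) (w j) := rfl
    rw [this, horth i hi j hj (Ne.symm hne)]
    simp
  have h1 : ‖∑ i ∈ s, Q i (w i)‖^2
      = Complex.re (inner ℂ (∑ i ∈ s, Q i (w i)) (∑ j ∈ s, Q j (w j))) := by
    rw [← @inner_self_eq_norm_sq ℂ]
    rfl
  rw [h1, expand, Complex.re_sum]
  refine Finset.sum_congr rfl fun i _ => ?_
  rw [← @inner_self_eq_norm_sq ℂ]
  rfl

lemma sum_norm_proj_sq {ι : Type*} (s : Finset ι) (Q : ι → H →L[ℂ] H)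
    (hsa : ∀ i, IsSelfAdjoint (Q i)) (hidem : ∀ i, IsIdempotentElem (Q i))
    (hsum : ∑ i ∈ s, Q i = 1) (x : H) :
    ∑ i ∈ s, ‖Q i x‖^2 = ‖x‖^2 := by
  have hterm : ∀ i, ‖Q i x‖^2 = Complex.re (inner ℂ x (Q i x)) := by
    intro i
    rw [← @inner_self_eq_norm_sq ℂ]
    congr 1
    rw [inner_proj_move (hsa i)]
    have : Q i (Q i x) = (Q i * Q i) x := rfl
    rw [this, (hidem i).eq]
    simp [RCLike.re_to_complex]
  simp only [hterm]
  rw [← Complex.re_sum, ← inner_sum]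
  have : ∑ i ∈ s, Q i x = x := by
    rw [← ContinuousLinearMap.sum_apply, hsum, ContinuousLinearMap.one_apply]
  rw [this, ← @inner_self_eq_norm_sq ℂ]
  rfl

lemma sum_piFinset_ofFn_prod {R : Type*} [Semiring R] :
    ∀ {n : ℕ} (T : Finset ℤ) (g : Fin n → ℤ → R),
    ∑ k ∈ Fintype.piFinset (fun _ : Fin n => T), (List.ofFn fun i => g i (k i)).prod
      = (List.ofFn fun i => ∑ j ∈ T, g i j).prod := by
  intro n
  induction n with
  | zero =>
    intro T g
    simp [List.ofFn_zero]
  | succ n ih =>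
    intro T g
    have hbij : ∑ k ∈ Fintype.piFinset (fun _ : Fin (n+1) => T),
        (List.ofFn fun i => g i (k i)).prod
        = ∑ p ∈ T ×ˢ Fintype.piFinset (fun _ : Fin n => T),
            (List.ofFn fun i => g i ((Fin.cons p.1 p.2 : Fin (n+1) → ℤ) i)).prod := by
      refine Finset.sum_bij' (fun k _ => (k 0, Fin.tail k)) (fun p _ => Fin.cons p.1 p.2)
        ?_ ?_ ?_ ?_ ?_
      · intro k hk
        simp only [Fintype.mem_piFinset] at hk
        simp only [Finset.mem_product, Fintype.mem_piFinset]
        exact ⟨hk 0, fun i => hk _⟩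
      · intro p hp
        simp only [Finset.mem_product, Fintype.mem_piFinset] at hp
        simp only [Fintype.mem_piFinset]
        intro i
        refine Fin.cases ?_ ?_ i
        · simpa using hp.1
        · intro j; simpa using hp.2 j
      · intro k _
        exact Fin.cons_self_tail k
      · intro p _
        simp [Fin.tail_cons]
      · intro k _
        simp only [Fin.cons_self_tail]
    rw [hbij, Finset.sum_product]
    have hterm : ∀ a b,
        (List.ofFn fun i : Fin (n+1) => g i ((Fin.cons a b : Fin (n+1) → ℤ) i)).prod
        = g 0 a * (List.ofFn fun i : Fin n => g i.succ (b i)).prod := by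
      intro a b
      rw [List.ofFn_succ, List.prod_cons]
      simp [Fin.cons_zero, Fin.cons_succ]
    simp only [hterm]
    rw [List.ofFn_succ, List.prod_cons]
    rw [← ih T (fun i j => g i.succ j)]
    rw [Finset.sum_mul]
    congr 1
    ext a
    rw [Finset.mul_sum]

lemma mul_ofFn_prod_eq_zero {R : Type*} [MonoidWithZero R] :
    ∀ {n : ℕ} (f : Fin n → R) (Q : R) (_ : ∀ i, Commute Q (f i)) (i₀ : Fin n)
    (_ : Q * f i₀ = 0), Q * (List.ofFn f).prod = 0 := by
  intro n
  induction n with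
  | zero => exact fun f Q hc i₀ => i₀.elim0
  | succ n ih =>
    intro f Q hc i₀ h
    rw [List.ofFn_succ, List.prod_cons, ← mul_assoc]
    rcases Fin.eq_zero_or_eq_succ i₀ with h0 | ⟨j, rfl⟩
    · subst h0
      rw [h, zero_mul]
    · rw [(hc 0).eq, mul_assoc, ih (fun i => f i.succ) Q (fun i => hc i.succ) j h, mul_zero]

lemma mul_ofFn_prod_absorb {R : Type*} [Monoid R] :
    ∀ {n : ℕ} (f : Fin n → R) (Q : R) (_ : ∀ i, Commute Q (f i)) (i₀ : Fin n)
    (_ : Q * f i₀ = f i₀), Q * (List.ofFn f).prod = (List.ofFn f).prod := by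
  intro n
  induction n with
  | zero => exact fun f Q hc i₀ => i₀.elim0
  | succ n ih =>
    intro f Q hc i₀ h
    rw [List.ofFn_succ, List.prod_cons, ← mul_assoc]
    rcases Fin.eq_zero_or_eq_succ i₀ with h0 | ⟨j, rfl⟩
    · subst h0
      rw [h]
    · rw [(hc 0).eq, mul_assoc, ih (fun i => f i.succ) Q (fun i => hc i.succ) j h]

lemma commute_ofFn_prod {R : Type*} [Monoid R] {n : ℕ} (f : Fin n → R) (Q : R)
    (hc : ∀ i, Commute Q (f i)) : Commute Q (List.ofFn f).prod := by
  refine Commute.list_prod_right _ _ fun x hx => ?_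
  rw [List.mem_ofFn] at hx
  rcases hx with ⟨i, rfl⟩
  exact hc i

lemma ofFn_prod_mul_eq_zero {R : Type*} [MonoidWithZero R] {n : ℕ} (f : Fin n → R) (Q : R)
    (hc : ∀ i, Commute Q (f i)) (i₀ : Fin n) (h : f i₀ * Q = 0) :
    (List.ofFn f).prod * Q = 0 := by
  rw [← (commute_ofFn_prod f Q hc).eq]
  exact mul_ofFn_prod_eq_zero f Q hc i₀ (by rw [(hc i₀).eq, h])

lemma ofFn_prod_mul_absorb {R : Type*} [Monoid R] {n : ℕ} (f : Fin n → R) (Q : R)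
    (hc : ∀ i, Commute Q (f i)) (i₀ : Fin n) (h : f i₀ * Q = f i₀) :
    (List.ofFn f).prod * Q = (List.ofFn f).prod := by
  rw [← (commute_ofFn_prod f Q hc).eq]
  exact mul_ofFn_prod_absorb f Q hc i₀ (by rw [(hc i₀).eq, h])

end Aux

/-- Lemma 2.2: if `B` fails to commute with some `E_{i₀}`, then some compression
`F^m_{k} B F^m_{k'}` with `k ≠ k'` is nonzero. -/
theorem exists_Fproj_compression_ne_zero {H : Type*} [NormedAddCommGroup H]
    [InnerProductSpace ℂ H] [CompleteSpace H] {n : ℕ}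
    (E : Fin n → H →L[ℂ] H) (P : Fin n → Set ℝ → H →L[ℂ] H)
    (heff : ∀ i, 0 ≤ E i ∧ E i ≤ 1)
    (hcomm : ∀ i j, E i * E j = E j * E i)
    (hP : ∀ i, IsSpectralMeasure (E i) (P i))
    (hPcomm : ∀ i j s t, P i s * P j t = P j t * P i s)
    (B : H →L[ℂ] H)
    (hB : ∃ i₀, B * E i₀ ≠ E i₀ * B) :
    ∃ (m : ℕ), 0 < m ∧ ∃ k k' : Fin n → ℤ, (∃ i, k i ≠ k' i) ∧
      Fproj P m k * B * Fproj P m k' ≠ 0 := by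
  by_contra hcon
  push_neg at hcon
  obtain ⟨i₀, hBE⟩ := hB
  apply hBE
  have hp := hP i₀
  have hA0 : 0 ≤ E i₀ := (heff i₀).1
  have hA1 : E i₀ ≤ 1 := (heff i₀).2
  suffices hC0 : E i₀ * B - B * E i₀ = 0 by
    have : E i₀ * B = B * E i₀ := by rwa [sub_eq_zero] at hC0
    exact this.symm
  have key : ∀ (m : ℕ), 0 < m → ∀ x : H,
      ‖(E i₀ * B - B * E i₀) x‖ ≤ 2 * ‖B‖ / m * ‖x‖ := by
    intro m hm x
    have hm' : (0:ℝ) < m := by exact_mod_cast hm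
    set T : Finset ℤ := Finset.Icc (-1 : ℤ) (m:ℤ) with hT
    set Q : ℤ → H →L[ℂ] H :=
      fun j => P i₀ (Set.Ioc ((j:ℝ)/m) (((j:ℝ)+1)/m)) with hQ
    have hQidem : ∀ j, IsIdempotentElem (Q j) := fun j => hp.isIdem _
    have hQsa : ∀ j, IsSelfAdjoint (Q j) := fun j => hp.selfAdj _
    have hQsum : ∑ j ∈ T, Q j = 1 := SM.resolution hp hA0 hA1 hm
    have hIoc_disj : ∀ j j' : ℤ, j ≠ j' →
        (Set.Ioc ((j:ℝ)/m) (((j:ℝ)+1)/m)) ∩ (Set.Ioc ((j':ℝ)/m) (((j':ℝ)+1)/m)) = ∅ := by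
      intro j j' hne
      rw [Set.Ioc_inter_Ioc, Set.Ioc_eq_empty]
      rw [not_lt]
      rcases lt_or_gt_of_ne hne with hlt | hlt
      · have hc : (j:ℝ) + 1 ≤ (j':ℝ) := by exact_mod_cast hlt
        refine le_trans (min_le_left _ _) (le_trans ?_ (le_max_right _ _))
        gcongr
      · have hc : (j':ℝ) + 1 ≤ (j:ℝ) := by exact_mod_cast hlt
        refine le_trans (min_le_right _ _) (le_trans ?_ (le_max_left _ _))
        gcongr
    have hPP : ∀ (i : Fin n) (j j' : ℤ), j ≠ j' →
        P i (Set.Ioc ((j:ℝ)/m) (((j:ℝ)+1)/m)) * P i (Set.Ioc ((j':ℝ)/m) (((j':ℝ)+1)/m)) = 0 := by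
      intro i j j' hne
      rw [← (hP i).inter, hIoc_disj j j' hne, (hP i).empty]
    have hQorth : ∀ j j' : ℤ, j ≠ j' → Q j * Q j' = 0 := fun j j' h => hPP i₀ j j' h
    -- resolution of identity for the products
    set piF := Fintype.piFinset (fun _ : Fin n => T) with hpiF
    have hFsum : ∑ k ∈ piF, Fproj P m k = 1 := by
      have hkey := sum_piFinset_ofFn_prod (R := H →L[ℂ] H) T
        (fun i j => P i (Set.Ioc ((j:ℝ)/m) (((j:ℝ)+1)/m)))
      simp only [Fproj, hpiF]
      rw [hkey]
      have hres : (fun i : Fin n => ∑ j ∈ T, P i (Set.Ioc ((j:ℝ)/m) (((j:ℝ)+1)/m)))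
          = fun _ : Fin n => (1 : H →L[ℂ] H) :=
        funext fun i => SM.resolution (hP i) (heff i).1 (heff i).2 hm
      rw [hres]
      simp
    have hcommQP : ∀ (r : ℤ) (k : Fin n → ℤ), ∀ i : Fin n,
        Commute (Q r) (P i (Set.Ioc (((k i):ℝ)/m) ((((k i):ℝ)+1)/m))) :=
      fun r k i => hPcomm i₀ i _ _
    have hoff : ∀ r ∈ T, ∀ r' ∈ T, r ≠ r' → Q r * B * Q r' = 0 := by
      intro r hr r' hr' hne
      have step : Q r * B * Q r' = ∑ k ∈ piF, ∑ k' ∈ piF,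
          (Q r * Fproj P m k) * B * (Fproj P m k' * Q r') := by
        calc Q r * B * Q r'
            = (∑ k ∈ piF, Q r * Fproj P m k) * B * (∑ k' ∈ piF, Fproj P m k' * Q r') := by
              rw [← Finset.mul_sum, ← Finset.sum_mul, hFsum, mul_one, one_mul]
          _ = ∑ k ∈ piF, ∑ k' ∈ piF, (Q r * Fproj P m k) * B * (Fproj P m k' * Q r') := by
              rw [Finset.sum_mul, Finset.sum_mul_sum]
      rw [step]
      refine Finset.sum_eq_zero fun k hk => Finset.sum_eq_zero fun k' hk' => ?_
      by_cases hk0 : k i₀ = r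
      · by_cases hk0' : k' i₀ = r'
        · have habs1 : Q r * Fproj P m k = Fproj P m k := by
            show Q r * (List.ofFn fun i =>
              P i (Set.Ioc (((k i):ℝ)/m) ((((k i):ℝ)+1)/m))).prod = _
            refine mul_ofFn_prod_absorb _ _ (hcommQP r k) i₀ ?_
            rw [hk0]
            exact (hQidem r).eq
          have habs2 : Fproj P m k' * Q r' = Fproj P m k' := by
            show (List.ofFn fun i =>
              P i (Set.Ioc (((k' i):ℝ)/m) ((((k' i):ℝ)+1)/m))).prod * Q r' = _
            refine ofFn_prod_mul_absorb _ _ (hcommQP r' k') i₀ ?_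
            rw [hk0']
            exact (hQidem r').eq
          rw [habs1, habs2]
          exact hcon m hm k k' ⟨i₀, by rw [hk0, hk0']; exact hne⟩
        · have hz : Fproj P m k' * Q r' = 0 := by
            show (List.ofFn fun i =>
              P i (Set.Ioc (((k' i):ℝ)/m) ((((k' i):ℝ)+1)/m))).prod * Q r' = 0
            exact ofFn_prod_mul_eq_zero _ _ (hcommQP r' k') i₀ (hPP i₀ (k' i₀) r' hk0')
          rw [hz, mul_zero]
      · have hz : Q r * Fproj P m k = 0 := by
          show Q r * (List.ofFn fun i =>
            P i (Set.Ioc (((k i):ℝ)/m) ((((k i):ℝ)+1)/m))).prod = 0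
          exact mul_ofFn_prod_eq_zero _ _ (hcommQP r k) i₀ (hPP i₀ r (k i₀) (Ne.symm hk0))
        rw [hz, zero_mul, zero_mul]
    have hdiag : B = ∑ r ∈ T, Q r * B * Q r := by
      calc B = (∑ r ∈ T, Q r) * B * (∑ r ∈ T, Q r) := by rw [hQsum, one_mul, mul_one]
        _ = ∑ r ∈ T, ∑ r' ∈ T, (Q r * B) * Q r' := by
            rw [Finset.sum_mul, Finset.sum_mul_sum]
        _ = ∑ r ∈ T, Q r * B * Q r := by
            refine Finset.sum_congr rfl fun r hr => ?_
            exact Finset.sum_eq_single_of_mem r hr fun r' hr' hne => hoff r hr r' hr' (Ne.symm hne)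
    -- diagonal compressions of E i₀
    set Top : ℤ → H →L[ℂ] H := fun r => Q r * E i₀ * Q r with hTop
    set X : ℤ → H →L[ℂ] H := fun r => Top r - (((r:ℝ)/m : ℝ):ℂ) • Q r with hX
    have hComm : ∀ r, E i₀ * Q r = Q r * E i₀ := fun r => hp.commutes _
    have hAQ : ∀ r, E i₀ * Q r = Top r := by
      intro r
      calc E i₀ * Q r = E i₀ * (Q r * Q r) := by rw [(hQidem r).eq]
        _ = (E i₀ * Q r) * Q r := by rw [mul_assoc]
        _ = (Q r * E i₀) * Q r := by rw [hComm r]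
    have hQA : ∀ r, Q r * E i₀ = Top r := fun r => by rw [← hComm r, hAQ r]
    have hcommutator : E i₀ * B - B * E i₀
        = ∑ r ∈ T, (X r * B * Q r - Q r * B * X r) := by
      have h2 : E i₀ * B - B * E i₀
          = ∑ r ∈ T, (E i₀ * (Q r * B * Q r) - (Q r * B * Q r) * E i₀) := by
        conv_lhs => rw [hdiag]
        rw [Finset.mul_sum, Finset.sum_mul, ← Finset.sum_sub_distrib]
      rw [h2]
      refine Finset.sum_congr rfl fun r _ => ?_
      have e1 : E i₀ * (Q r * B * Q r) = Top r * B * Q r := by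
        rw [← mul_assoc, ← mul_assoc, hAQ r]
      have e2 : (Q r * B * Q r) * E i₀ = Q r * B * Top r := by
        rw [mul_assoc, hQA r]
      rw [e1, e2, hX]
      simp only [sub_mul, mul_sub, smul_mul_assoc, mul_smul_comm]
      abel
    have hX0 : ∀ r : ℤ, (0 : H →L[ℂ] H) ≤ X r := by
      intro r
      show (0 : H →L[ℂ] H) ≤ Top r - (((r:ℝ)/m : ℝ):ℂ) • Q r
      rw [sub_nonneg]
      exact hp.smul_le ((r:ℝ)/m) (((r:ℝ)+1)/m)
    have hX1 : ∀ r : ℤ, X r ≤ (((1:ℝ)/(m:ℝ) : ℝ):ℂ) • 1 := by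
      intro r
      have h1 : Top r ≤ (((((r:ℝ)+1)/m) : ℝ):ℂ) • Q r := hp.le_smul ((r:ℝ)/m) (((r:ℝ)+1)/m)
      have heq : (((((r:ℝ)+1)/m) : ℝ):ℂ) • Q r - (((r:ℝ)/m : ℝ):ℂ) • Q r
          = (((1:ℝ)/(m:ℝ) : ℝ):ℂ) • Q r := by
        rw [← sub_smul, ← Complex.ofReal_sub, div_sub_div_same]
        norm_num
      have h2 : X r ≤ (((1:ℝ)/(m:ℝ) : ℝ):ℂ) • Q r := by
        show Top r - (((r:ℝ)/m : ℝ):ℂ) • Q r ≤ _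
        calc Top r - (((r:ℝ)/m : ℝ):ℂ) • Q r
            ≤ (((((r:ℝ)+1)/m) : ℝ):ℂ) • Q r - (((r:ℝ)/m : ℝ):ℂ) • Q r :=
              sub_le_sub_right h1 _
          _ = _ := heq
      refine h2.trans ?_
      rw [← sub_nonneg, ← smul_sub]
      refine smul_nonneg2 _ (by positivity) ?_
      rw [sub_nonneg]
      exact proj_le_one (hQidem r) (hQsa r)
    have hXnorm : ∀ r : ℤ, ‖X r‖ ≤ 1/(m:ℝ) :=
      fun r => norm_le_of_le_smul_one (by positivity) (hX0 r) (hX1 r)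
    have hQX : ∀ r : ℤ, Q r * X r = X r := by
      intro r
      show Q r * (Top r - (((r:ℝ)/m : ℝ):ℂ) • Q r) = Top r - (((r:ℝ)/m : ℝ):ℂ) • Q r
      rw [mul_sub, mul_smul_comm]
      congr 1
      · show Q r * (Q r * E i₀ * Q r) = Q r * E i₀ * Q r
        rw [← mul_assoc, ← mul_assoc, (hQidem r).eq]
      · congr 1
        exact (hQidem r).eq
    have hXQ : ∀ r : ℤ, X r * Q r = X r := by
      intro r
      show (Top r - (((r:ℝ)/m : ℝ):ℂ) • Q r) * Q r = Top r - (((r:ℝ)/m : ℝ):ℂ) • Q r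
      rw [sub_mul, smul_mul_assoc]
      congr 1
      · show Q r * E i₀ * Q r * Q r = Q r * E i₀ * Q r
        rw [mul_assoc (Q r * E i₀), (hQidem r).eq]
      · congr 1
        exact (hQidem r).eq
    set w : ℤ → H := fun r => X r (B (Q r x)) - B (X r (Q r x)) with hw
    have hv : ∀ r : ℤ, (X r * B * Q r - Q r * B * X r) x = Q r (w r) := by
      intro r
      have hqx := DFunLike.congr_fun (hQX r) (B (Q r x))
      have hxq := DFunLike.congr_fun (hXQ r) x
      have hv1 : (X r * B * Q r) x = Q r (X r (B (Q r x))) := by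
        calc (X r * B * Q r) x = X r (B (Q r x)) := rfl
          _ = Q r (X r (B (Q r x))) := hqx.symm
      have hv2 : (Q r * B * X r) x = Q r (B (X r (Q r x))) := by
        calc (Q r * B * X r) x = Q r (B (X r x)) := rfl
          _ = Q r (B (X r (Q r x))) := by rw [show (X r) (Q r x) = X r x from hxq]
      rw [ContinuousLinearMap.sub_apply, hv1, hv2, hw]
      simp only
      rw [map_sub]
    have hwnorm : ∀ r : ℤ, ‖w r‖ ≤ 2 * ‖B‖ / m * ‖Q r x‖ := by
      intro r
      rw [hw]
      simp only
      have hb1 : ‖X r (B (Q r x))‖ ≤ 1/(m:ℝ) * (‖B‖ * ‖Q r x‖) := by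
        refine le_trans ((X r).le_opNorm _) ?_
        exact mul_le_mul (hXnorm r) (B.le_opNorm _) (norm_nonneg _) (by positivity)
      have hb2 : ‖B (X r (Q r x))‖ ≤ ‖B‖ * (1/(m:ℝ) * ‖Q r x‖) := by
        refine le_trans (B.le_opNorm _) ?_
        refine mul_le_mul_of_nonneg_left ?_ (norm_nonneg _)
        exact le_trans ((X r).le_opNorm _)
          (mul_le_mul_of_nonneg_right (hXnorm r) (norm_nonneg _))
      calc ‖X r (B (Q r x)) - B (X r (Q r x))‖
          ≤ ‖X r (B (Q r x))‖ + ‖B (X r (Q r x))‖ := norm_sub_le _ _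
        _ ≤ 1/(m:ℝ) * (‖B‖ * ‖Q r x‖) + ‖B‖ * (1/(m:ℝ) * ‖Q r x‖) := add_le_add hb1 hb2
        _ = 2 * ‖B‖ / m * ‖Q r x‖ := by ring
    have hCx : (E i₀ * B - B * E i₀) x = ∑ r ∈ T, Q r (w r) := by
      rw [hcommutator, ContinuousLinearMap.sum_apply]
      exact Finset.sum_congr rfl fun r _ => hv r
    have hsq : ‖(E i₀ * B - B * E i₀) x‖^2 ≤ (2 * ‖B‖ / m * ‖x‖)^2 := by
      rw [hCx, pythagoras_proj T Q hQsa (fun i _ j _ h => hQorth i j h) w]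
      calc ∑ r ∈ T, ‖Q r (w r)‖^2
          ≤ ∑ r ∈ T, (2 * ‖B‖ / m * ‖Q r x‖)^2 := by
            refine Finset.sum_le_sum fun r _ => ?_
            refine pow_le_pow_left₀ (norm_nonneg _) ?_ 2
            exact le_trans (norm_proj_apply_le (hQidem r) (hQsa r) _) (hwnorm r)
        _ = (2 * ‖B‖ / m)^2 * ∑ r ∈ T, ‖Q r x‖^2 := by
            rw [Finset.mul_sum]
            exact Finset.sum_congr rfl fun r _ => by ring
        _ = (2 * ‖B‖ / m)^2 * ‖x‖^2 := by rw [sum_norm_proj_sq T Q hQsa hQidem hQsum x]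
        _ = (2 * ‖B‖ / m * ‖x‖)^2 := by ring
    have h2B : (0:ℝ) ≤ 2 * ‖B‖ / m * ‖x‖ := by positivity
    nlinarith [norm_nonneg ((E i₀ * B - B * E i₀) x), hsq, h2B]
  ext x
  have hlim : Filter.Tendsto (fun m : ℕ => 2 * ‖B‖ * ‖x‖ / m) Filter.atTop (nhds 0) :=
    tendsto_const_div_atTop_nhds_zero_nat _
  have hev : ∀ᶠ m : ℕ in Filter.atTop, ‖(E i₀ * B - B * E i₀) x‖ ≤ 2 * ‖B‖ * ‖x‖ / m := by
    filter_upwards [Filter.eventually_ge_atTop 1] with m hm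
    calc ‖(E i₀ * B - B * E i₀) x‖ ≤ 2 * ‖B‖ / m * ‖x‖ := key m (by omega) x
      _ = 2 * ‖B‖ * ‖x‖ / m := by ring
  have h0 : ‖(E i₀ * B - B * E i₀) x‖ ≤ 0 := ge_of_tendsto hlim hev
  have : (E i₀ * B - B * E i₀) x = 0 := norm_le_zero_iff.mp h0
  simpa using this
end

section
/- Let A = {E_i}_{i=1}^n (n possibly infinite) be a family of effects on a complex Hilbert space with ∑_{i=1}^n E_i² converging in the strong operator topology. Then the Lüders operation Φ_A(B) = ∑_i E_i B E_i is a bounded linear map on B(H) with ‖Φ_A‖ = ‖∑_i E_i²‖. -/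
open scoped InnerProductSpace
open RCLike Real

/-- If `∑ Eᵢ²` converges strongly to `F`, then the Lüders operation `Φ_A(B) = ∑ Eᵢ B Eᵢ`
is a bounded linear map on `B(H)` with `‖Φ_A‖ = ‖F‖ = ‖∑ Eᵢ²‖`. -/
theorem luders_operation_norm {H : Type*} [NormedAddCommGroup H] [InnerProductSpace ℂ H]
    [CompleteSpace H] {ι : Type*} (E : ι → H →L[ℂ] H)
    (heff : ∀ i, 0 ≤ E i ∧ E i ≤ 1)
    (F : H →L[ℂ] H) (hF : ∀ x, HasSum (fun i => E i (E i x)) (F x)) :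
    ∃ Φ : (H →L[ℂ] H) →L[ℂ] (H →L[ℂ] H),
      (∀ B x, HasSum (fun i => E i (B (E i x))) (Φ B x)) ∧ ‖Φ‖ = ‖F‖ := by
  -- self-adjointness of each `E i`
  have hsym : ∀ i (u v : H), ⟪E i u, v⟫_ℂ = ⟪u, E i v⟫_ℂ := by
    intro i u v
    exact (ContinuousLinearMap.isSelfAdjoint_iff_isSymmetric.mp
      (((ContinuousLinearMap.nonneg_iff_isPositive (E i)).mp (heff i).1).isSelfAdjoint)) u v
  -- `∑ ‖E i x‖² = re ⟪F x, x⟫`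
  have hsum2 : ∀ x : H, HasSum (fun i => ‖E i x‖ ^ 2) (Complex.re ⟪F x, x⟫_ℂ) := by
    intro x
    have h1 : HasSum (fun i => ⟪x, E i (E i x)⟫_ℂ) ⟪x, F x⟫_ℂ :=
      (hF x).mapL (innerSL ℂ x)
    have h2 : HasSum (fun i => Complex.re ⟪x, E i (E i x)⟫_ℂ) (Complex.re ⟪x, F x⟫_ℂ) :=
      h1.mapL Complex.reCLM
    have h3 : ∀ i, Complex.re ⟪x, E i (E i x)⟫_ℂ = ‖E i x‖ ^ 2 := by
      intro i
      rw [← hsym i x (E i x)]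
      simpa using inner_self_eq_norm_sq (𝕜 := ℂ) (E i x)
    have h4 : Complex.re ⟪F x, x⟫_ℂ = Complex.re ⟪x, F x⟫_ℂ :=
      inner_re_symm (𝕜 := ℂ) (F x) x
    rw [h4]
    simpa only [h3] using h2
  -- partial sums of `‖E i v‖²` are bounded by `‖F‖ * ‖v‖²`
  have bound2 : ∀ (t : Finset ι) (v : H), ∑ i ∈ t, ‖E i v‖ ^ 2 ≤ ‖F‖ * ‖v‖ ^ 2 := by
    intro t v
    have h1 : ∑ i ∈ t, ‖E i v‖ ^ 2 ≤ Complex.re ⟪F v, v⟫_ℂ :=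
      sum_le_hasSum t (fun i _ => sq_nonneg _) (hsum2 v)
    refine h1.trans ?_
    calc Complex.re ⟪F v, v⟫_ℂ ≤ ‖⟪F v, v⟫_ℂ‖ := Complex.re_le_norm _
      _ ≤ ‖F v‖ * ‖v‖ := norm_inner_le_norm _ _
      _ ≤ (‖F‖ * ‖v‖) * ‖v‖ := by
          gcongr
          exact (F).le_opNorm v
      _ = ‖F‖ * ‖v‖ ^ 2 := by ring
  -- key finite estimate
  have key : ∀ (B : H →L[ℂ] H) (x : H) (t : Finset ι),
      ‖∑ i ∈ t, E i (B (E i x))‖ ≤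
        ‖B‖ * Real.sqrt (∑ i ∈ t, ‖E i x‖ ^ 2) * Real.sqrt ‖F‖ := by
    intro B x t
    set v := ∑ i ∈ t, E i (B (E i x)) with hv
    have hS : (0:ℝ) ≤ ∑ i ∈ t, ‖E i x‖ ^ 2 := Finset.sum_nonneg fun i _ => sq_nonneg _
    have hnv : ‖v‖ ^ 2 ≤ (‖B‖ * Real.sqrt (∑ i ∈ t, ‖E i x‖ ^ 2) * Real.sqrt ‖F‖) * ‖v‖ := by
      have h1 : (‖v‖:ℝ) ^ 2 = Complex.re ⟪v, v⟫_ℂ :=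
        (inner_self_eq_norm_sq (𝕜 := ℂ) v).symm
      have h2 : ⟪v, v⟫_ℂ = ∑ i ∈ t, ⟪B (E i x), E i v⟫_ℂ := by
        rw [hv, sum_inner]
        exact Finset.sum_congr rfl fun i _ => by rw [hsym i (B (E i x)) v]
      have h3 : Complex.re ⟪v, v⟫_ℂ ≤ ∑ i ∈ t, ‖B‖ * ‖E i x‖ * ‖E i v‖ := by
        rw [h2, Complex.re_sum]
        refine Finset.sum_le_sum fun i _ => ?_
        calc Complex.re ⟪B (E i x), E i v⟫_ℂ ≤ ‖⟪B (E i x), E i v⟫_ℂ‖ := Complex.re_le_norm _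
          _ ≤ ‖B (E i x)‖ * ‖E i v‖ := norm_inner_le_norm _ _
          _ ≤ ‖B‖ * ‖E i x‖ * ‖E i v‖ := by gcongr; exact B.le_opNorm _
      have h4 : ∑ i ∈ t, ‖E i x‖ * ‖E i v‖ ≤
          Real.sqrt (∑ i ∈ t, ‖E i x‖ ^ 2) * Real.sqrt (∑ i ∈ t, ‖E i v‖ ^ 2) :=
        Real.sum_mul_le_sqrt_mul_sqrt t _ _
      have h5 : Real.sqrt (∑ i ∈ t, ‖E i v‖ ^ 2) ≤ Real.sqrt ‖F‖ * ‖v‖ := by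
        calc Real.sqrt (∑ i ∈ t, ‖E i v‖ ^ 2) ≤ Real.sqrt (‖F‖ * ‖v‖ ^ 2) :=
              Real.sqrt_le_sqrt (bound2 t v)
          _ = Real.sqrt ‖F‖ * ‖v‖ := by
              rw [Real.sqrt_mul (norm_nonneg F), Real.sqrt_sq (norm_nonneg v)]
      calc ‖v‖ ^ 2 = Complex.re ⟪v, v⟫_ℂ := h1
        _ ≤ ∑ i ∈ t, ‖B‖ * ‖E i x‖ * ‖E i v‖ := h3
        _ = ‖B‖ * ∑ i ∈ t, ‖E i x‖ * ‖E i v‖ := by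
            rw [Finset.mul_sum]; exact Finset.sum_congr rfl fun i _ => by ring
        _ ≤ ‖B‖ * (Real.sqrt (∑ i ∈ t, ‖E i x‖ ^ 2) * Real.sqrt (∑ i ∈ t, ‖E i v‖ ^ 2)) := by
            gcongr
        _ ≤ ‖B‖ * (Real.sqrt (∑ i ∈ t, ‖E i x‖ ^ 2) * (Real.sqrt ‖F‖ * ‖v‖)) := by
            gcongr
        _ = (‖B‖ * Real.sqrt (∑ i ∈ t, ‖E i x‖ ^ 2) * Real.sqrt ‖F‖) * ‖v‖ := by ring
    rcases eq_or_lt_of_le (norm_nonneg v) with h0 | h0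
    · rw [← h0]
      positivity
    · have h := hnv
      rw [sq] at h
      exact le_of_mul_le_mul_right h h0
  -- summability
  have hsummable : ∀ (B : H →L[ℂ] H) (x : H), Summable (fun i => E i (B (E i x))) := by
    intro B x
    rw [summable_iff_vanishing]
    intro e he
    rcases Metric.mem_nhds_iff.mp he with ⟨ε, hε, hball⟩
    set C : ℝ := ‖B‖ * Real.sqrt ‖F‖ + 1 with hC
    have hC0 : 0 < C := by positivity
    have hδ : (0:ℝ) < (ε / C) ^ 2 := by positivity
    have hvan := (summable_iff_vanishing.mp (hsum2 x).summable)
      (Metric.ball 0 ((ε / C) ^ 2)) (Metric.ball_mem_nhds 0 hδ)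
    rcases hvan with ⟨s, hs⟩
    refine ⟨s, fun t ht => ?_⟩
    apply hball
    have hSnn : (0:ℝ) ≤ ∑ i ∈ t, ‖E i x‖ ^ 2 := Finset.sum_nonneg fun i _ => sq_nonneg _
    have hSlt : ∑ i ∈ t, ‖E i x‖ ^ 2 < (ε / C) ^ 2 := by
      have := hs t ht
      rw [Metric.mem_ball, Real.dist_eq, sub_zero] at this
      calc ∑ i ∈ t, ‖E i x‖ ^ 2 ≤ |∑ i ∈ t, ‖E i x‖ ^ 2| := le_abs_self _
        _ < (ε / C) ^ 2 := this
    have hsq : Real.sqrt (∑ i ∈ t, ‖E i x‖ ^ 2) < ε / C := by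
      have h := Real.sqrt_lt_sqrt hSnn hSlt
      rwa [Real.sqrt_sq (by positivity)] at h
    rw [Metric.mem_ball]
    calc dist (∑ i ∈ t, E i (B (E i x))) 0 = ‖∑ i ∈ t, E i (B (E i x))‖ := by
          rw [dist_zero_right]
      _ ≤ ‖B‖ * Real.sqrt (∑ i ∈ t, ‖E i x‖ ^ 2) * Real.sqrt ‖F‖ := key B x t
      _ = (‖B‖ * Real.sqrt ‖F‖) * Real.sqrt (∑ i ∈ t, ‖E i x‖ ^ 2) := by ring
      _ ≤ (‖B‖ * Real.sqrt ‖F‖) * (ε / C) := by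
          gcongr
      _ < C * (ε / C) := by
          have : ‖B‖ * Real.sqrt ‖F‖ < C := by rw [hC]; linarith
          exact mul_lt_mul_of_pos_right this (by positivity)
      _ = ε := by field_simp
  have hΦsum : ∀ (B : H →L[ℂ] H) (x : H),
      HasSum (fun i => E i (B (E i x))) (∑' i, E i (B (E i x))) :=
    fun B x => (hsummable B x).hasSum
  -- norm bound on the tsum
  have htsum_bound : ∀ (B : H →L[ℂ] H) (x : H),
      ‖∑' i, E i (B (E i x))‖ ≤ ‖B‖ * ‖F‖ * ‖x‖ := by
    intro B x
    have h1 : ∀ t : Finset ι, ‖∑ i ∈ t, E i (B (E i x))‖ ≤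
        ‖B‖ * (Real.sqrt ‖F‖ * ‖x‖) * Real.sqrt ‖F‖ := by
      intro t
      refine (key B x t).trans ?_
      gcongr
      calc Real.sqrt (∑ i ∈ t, ‖E i x‖ ^ 2) ≤ Real.sqrt (‖F‖ * ‖x‖ ^ 2) :=
            Real.sqrt_le_sqrt (bound2 t x)
        _ = Real.sqrt ‖F‖ * ‖x‖ := by
            rw [Real.sqrt_mul (norm_nonneg F), Real.sqrt_sq (norm_nonneg x)]
    have h2 : Filter.Tendsto (fun t : Finset ι => ‖∑ i ∈ t, E i (B (E i x))‖)
        Filter.atTop (nhds ‖∑' i, E i (B (E i x))‖) :=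
      (continuous_norm.continuousAt).tendsto.comp (hΦsum B x)
    have h3 := le_of_tendsto h2 (Filter.Eventually.of_forall h1)
    calc ‖∑' i, E i (B (E i x))‖ ≤ ‖B‖ * (Real.sqrt ‖F‖ * ‖x‖) * Real.sqrt ‖F‖ := h3
      _ = ‖B‖ * (Real.sqrt ‖F‖ * Real.sqrt ‖F‖) * ‖x‖ := by ring
      _ = ‖B‖ * ‖F‖ * ‖x‖ := by
          rw [Real.mul_self_sqrt (norm_nonneg F)]
  -- construct Φ
  let g : (H →L[ℂ] H) → H →ₗ[ℂ] H := fun B =>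
    { toFun := fun x => ∑' i, E i (B (E i x))
      map_add' := by
        intro x y
        have h : HasSum (fun i => E i (B (E i (x + y))))
            ((∑' i, E i (B (E i x))) + ∑' i, E i (B (E i y))) := by
          have := (hΦsum B x).add (hΦsum B y)
          refine this.congr_fun fun i => ?_
          simp [map_add]
        exact h.tsum_eq
      map_smul' := by
        intro c x
        have h : HasSum (fun i => E i (B (E i (c • x)))) (c • ∑' i, E i (B (E i x))) := by
          have := (hΦsum B x).const_smul c
          refine this.congr_fun fun i => ?_
          simp [map_smul]
        simpa using h.tsum_eq }
  let Φ₀ : (H →L[ℂ] H) → (H →L[ℂ] H) := fun B =>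
    LinearMap.mkContinuous (g B) (‖B‖ * ‖F‖) (fun x => htsum_bound B x)
  have hΦ₀apply : ∀ B x, Φ₀ B x = ∑' i, E i (B (E i x)) := fun B x => rfl
  let Ψ : (H →L[ℂ] H) →ₗ[ℂ] (H →L[ℂ] H) :=
    { toFun := Φ₀
      map_add' := by
        intro B₁ B₂
        ext x
        have h : HasSum (fun i => E i ((B₁ + B₂) (E i x)))
            ((∑' i, E i (B₁ (E i x))) + ∑' i, E i (B₂ (E i x))) := by
          have := (hΦsum B₁ x).add (hΦsum B₂ x)
          refine this.congr_fun fun i => ?_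
          simp [map_add]
        simpa [hΦ₀apply] using h.tsum_eq
      map_smul' := by
        intro c B
        ext x
        have h : HasSum (fun i => E i ((c • B) (E i x))) (c • ∑' i, E i (B (E i x))) := by
          have := (hΦsum B x).const_smul c
          refine this.congr_fun fun i => ?_
          simp [map_smul]
        simpa [hΦ₀apply] using h.tsum_eq }
  have hΨ_bound : ∀ B, ‖Ψ B‖ ≤ ‖F‖ * ‖B‖ := by
    intro B
    have := LinearMap.mkContinuous_norm_le (g B) (mul_nonneg (norm_nonneg B) (norm_nonneg F))
      (fun x => htsum_bound B x)
    calc ‖Ψ B‖ ≤ ‖B‖ * ‖F‖ := this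
      _ = ‖F‖ * ‖B‖ := mul_comm _ _
  let Φ : (H →L[ℂ] H) →L[ℂ] (H →L[ℂ] H) := LinearMap.mkContinuous Ψ ‖F‖ hΨ_bound
  refine ⟨Φ, ?_, ?_⟩
  · intro B x
    have : Φ B x = ∑' i, E i (B (E i x)) := rfl
    rw [this]
    exact hΦsum B x
  · have hΦ1 : Φ 1 = F := by
      ext x
      have h1 : HasSum (fun i => E i ((1 : H →L[ℂ] H) (E i x))) (Φ 1 x) := by
        have : Φ 1 x = ∑' i, E i ((1 : H →L[ℂ] H) (E i x)) := rfl
        rw [this]; exact hΦsum 1 x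
      have h2 : HasSum (fun i => E i ((1 : H →L[ℂ] H) (E i x))) (F x) := by
        simpa using hF x
      exact h1.unique h2
    have hle : ‖Φ‖ ≤ ‖F‖ := LinearMap.mkContinuous_norm_le Ψ (norm_nonneg F) hΨ_bound
    have hge : ‖F‖ ≤ ‖Φ‖ := by
      calc ‖F‖ = ‖Φ 1‖ := by rw [hΦ1]
        _ ≤ ‖Φ‖ * ‖(1 : H →L[ℂ] H)‖ := Φ.le_opNorm 1
        _ ≤ ‖Φ‖ * 1 := by
            gcongr
            simpa [ContinuousLinearMap.one_def] using
              ContinuousLinearMap.norm_id_le (𝕜 := ℂ) (E := H)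
        _ = ‖Φ‖ := mul_one _
    linarith
end

section
/- Let A = {E_i}_{i=1}^n (1 ≤ n ≤ ∞) be a family of pairwise commuting effects on a complex Hilbert space H with ∑_{i=1}^n E_i² = I in the strong operator topology. Then the fixed point set of the Lüders operation equals the commutant: {B ∈ B(H) : ∑_i E_i B E_i = B} = {B ∈ B(H) : B E_i = E_i B for all i}. -/
open scoped InnerProductSpace ENNReal

namespace LudersAux

variable {H : Type*} [NormedAddCommGroup H] [InnerProductSpace ℂ H] [CompleteSpace H]
variable {ι : Type*} {E : ι → H →L[ℂ] H}

lemma sa {A : H →L[ℂ] H} (h : 0 ≤ A) (x y : H) : ⟪A x, y⟫_ℂ = ⟪x, A y⟫_ℂ := by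
  have hsa : IsSelfAdjoint A := IsSelfAdjoint.of_nonneg h
  conv_lhs => rw [← hsa.adjoint_eq]
  rw [ContinuousLinearMap.adjoint_inner_left]

omit [CompleteSpace H] in
lemma reinner (x : H) : (⟪x, x⟫_ℂ).re = ‖x‖ ^ 2 := by
  have := inner_self_eq_norm_sq (𝕜 := ℂ) (E := H) x
  simpa using this

variable (hE : ∀ i, 0 ≤ E i) (hsum : ∀ x : H, HasSum (fun i => E i (E i x)) x)
include hE hsum

lemma sumsq (v : H) : HasSum (fun i => ‖E i v‖ ^ 2) (‖v‖ ^ 2) := by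
  have h1 : HasSum (fun i => (⟪v, E i (E i v)⟫_ℂ).re) (⟪v, v⟫_ℂ).re :=
    Complex.reCLM.hasSum ((innerSL ℂ v).hasSum (hsum v))
  have he : (fun i => (⟪v, E i (E i v)⟫_ℂ).re) = fun i => ‖E i v‖ ^ 2 := by
    funext i
    rw [← sa (hE i) v (E i v), reinner]
  rw [← reinner v, ← he]
  exact h1

lemma summable_op (X : H →L[ℂ] H) (v : H) : Summable (fun i => ‖X (E i v)‖ ^ 2) := by
  refine Summable.of_nonneg_of_le (fun i => sq_nonneg _) (fun i => ?_)
    (((sumsq hE hsum v).summable).mul_left (‖X‖ ^ 2))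
  calc ‖X (E i v)‖ ^ 2 ≤ (‖X‖ * ‖E i v‖) ^ 2 := by
        apply pow_le_pow_left₀ (norm_nonneg _) (X.le_opNorm _)
    _ = ‖X‖ ^ 2 * ‖E i v‖ ^ 2 := by ring

lemma star_eq {C : H →L[ℂ] H} (hC : ∀ v, HasSum (fun i => E i (C (E i v))) (C v)) (v : H) :
    Summable (fun i => ‖E i (C v) - C (E i v)‖ ^ 2) ∧
    ∑' i, ‖C (E i v)‖ ^ 2 = ‖C v‖ ^ 2 + ∑' i, ‖E i (C v) - C (E i v)‖ ^ 2 := by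
  set g : ι → ℝ := fun i => 2 * (⟪C v, E i (C (E i v))⟫_ℂ).re - ‖E i (C v)‖ ^ 2 with hgdef
  have hg : HasSum g (‖C v‖ ^ 2) := by
    have h1 : HasSum (fun i => (⟪C v, E i (C (E i v))⟫_ℂ).re) (⟪C v, C v⟫_ℂ).re :=
      Complex.reCLM.hasSum ((innerSL ℂ (C v)).hasSum (hC v))
    rw [reinner] at h1
    have h2 := sumsq hE hsum (C v)
    have h3 := (h1.mul_left 2).sub h2
    have h4 : 2 * ‖C v‖ ^ 2 - ‖C v‖ ^ 2 = ‖C v‖ ^ 2 := by ring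
    rw [h4] at h3
    exact h3
  have hpt : ∀ i, ‖E i (C v) - C (E i v)‖ ^ 2 = ‖C (E i v)‖ ^ 2 - g i := by
    intro i
    have hns := norm_sub_sq (𝕜 := ℂ) (E i (C v)) (C (E i v))
    have hmove : ⟪E i (C v), C (E i v)⟫_ℂ = ⟪C v, E i (C (E i v))⟫_ℂ := sa (hE i) _ _
    rw [hmove] at hns
    simp only [hgdef, RCLike.re_to_complex] at hns ⊢
    rw [hns]; ring
  have hsummable : Summable (fun i => ‖C (E i v)‖ ^ 2) := summable_op hE hsum C v
  have hDsum : Summable (fun i => ‖E i (C v) - C (E i v)‖ ^ 2) := by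
    have : (fun i => ‖E i (C v) - C (E i v)‖ ^ 2) = fun i => ‖C (E i v)‖ ^ 2 - g i :=
      funext hpt
    rw [this]
    exact hsummable.sub hg.summable
  refine ⟨hDsum, ?_⟩
  have : HasSum (fun i => ‖C (E i v)‖ ^ 2 - g i) (∑' i, ‖C (E i v)‖ ^ 2 - ‖C v‖ ^ 2) :=
    hsummable.hasSum.sub hg
  have h3 : ∑' i, ‖E i (C v) - C (E i v)‖ ^ 2 = ∑' i, ‖C (E i v)‖ ^ 2 - ‖C v‖ ^ 2 := by
    rw [funext hpt]
    exact this.tsum_eq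
  rw [h3]; ring

lemma star_ge {C : H →L[ℂ] H} (hC : ∀ v, HasSum (fun i => E i (C (E i v))) (C v)) (v : H) :
    ‖C v‖ ^ 2 ≤ ∑' i, ‖C (E i v)‖ ^ 2 := by
  obtain ⟨hs, he⟩ := star_eq hE hsum hC v
  rw [he]
  have : (0:ℝ) ≤ ∑' i, ‖E i (C v) - C (E i v)‖ ^ 2 :=
    tsum_nonneg (fun i => sq_nonneg _)
  linarith

lemma star_ge2 {C : H →L[ℂ] H} (hC : ∀ v, HasSum (fun i => E i (C (E i v))) (C v)) (v : H)
    (j : ι) : ‖C v‖ ^ 2 + ‖E j (C v) - C (E j v)‖ ^ 2 ≤ ∑' i, ‖C (E i v)‖ ^ 2 := by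
  obtain ⟨hs, he⟩ := star_eq hE hsum hC v
  rw [he]
  have := Summable.le_tsum hs j (fun k _ => sq_nonneg _)
  linarith






end LudersAux

open LudersAux in
/-- Theorem 3.1: for a commutative family of effects with `∑ Eᵢ² = I` (strongly), the fixed
point set of the Lüders operation `Φ_A(B) = ∑ Eᵢ B Eᵢ` is exactly the commutant of the `Eᵢ`. -/
theorem fixedPoints_luders_eq_commutant {H : Type*} [NormedAddCommGroup H]
    [InnerProductSpace ℂ H] [CompleteSpace H] {ι : Type*} (E : ι → H →L[ℂ] H)
    (heff : ∀ i, 0 ≤ E i ∧ E i ≤ 1)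
    (hcomm : ∀ i j, E i * E j = E j * E i)
    (hsum : ∀ x : H, HasSum (fun i => E i (E i x)) x) :
    {B : H →L[ℂ] H | ∀ x, HasSum (fun i => E i (B (E i x))) (B x)} =
      {B : H →L[ℂ] H | ∀ i, B * E i = E i * B} := by
  have hE : ∀ i, 0 ≤ E i := fun i => (heff i).1
  have hcm : ∀ i j (w : H), E i (E j w) = E j (E i w) := by
    intro i j w
    have := congrArg (fun T => T w) (hcomm i j)
    simpa [ContinuousLinearMap.mul_apply] using this
  ext B
  simp only [Set.mem_setOf_eq]
  constructor
  · intro hB j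
    set C : H →L[ℂ] H := E j * B - B * E j with hCdef
    have hCapp : ∀ w, C w = E j (B w) - B (E j w) := by
      intro w
      simp [hCdef, ContinuousLinearMap.mul_apply]
    have hCfix : ∀ v, HasSum (fun i => E i (C (E i v))) (C v) := by
      intro v
      have h1 : HasSum (fun i => E j (E i (B (E i v)))) (E j (B v)) := (E j).hasSum (hB v)
      have h2 : HasSum (fun i => E i (B (E i (E j v)))) (B (E j v)) := hB (E j v)
      have h3 := h1.sub h2
      have heq : (fun i => E j (E i (B (E i v))) - E i (B (E i (E j v)))) =
          fun i => E i (C (E i v)) := by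
        funext i
        rw [hCapp (E i v), map_sub, hcm i j (B (E i v)), hcm i j v]
      rw [heq] at h3
      rw [hCapp v]
      exact h3
    have hCzero : ∀ v, C v = 0 := by
      intro v
      set a : ℕ → H → ℝ≥0∞ := fun n =>
        Nat.rec (fun w => ENNReal.ofReal (‖B w‖ ^ 2)) (fun _ prev w => ∑' i, prev (E i w)) n
        with hadef
      have ha0 : ∀ w, a 0 w = ENNReal.ofReal (‖B w‖ ^ 2) := fun _ => rfl
      have haS : ∀ n w, a (n + 1) w = ∑' i, a n (E i w) := fun _ _ => rfl
      have hupper : ∀ n w, a n w ≤ ENNReal.ofReal (‖B‖ ^ 2 * ‖w‖ ^ 2) := by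
        intro n
        induction n with
        | zero =>
          intro w
          rw [ha0]
          apply ENNReal.ofReal_le_ofReal
          calc ‖B w‖ ^ 2 ≤ (‖B‖ * ‖w‖) ^ 2 :=
              pow_le_pow_left₀ (norm_nonneg _) (B.le_opNorm w) 2
            _ = ‖B‖ ^ 2 * ‖w‖ ^ 2 := by ring
        | succ n ih =>
          intro w
          rw [haS]
          calc ∑' i, a n (E i w) ≤ ∑' i, ENNReal.ofReal (‖B‖ ^ 2 * ‖E i w‖ ^ 2) :=
              ENNReal.tsum_le_tsum (fun i => ih (E i w))
            _ = ENNReal.ofReal (∑' i, ‖B‖ ^ 2 * ‖E i w‖ ^ 2) :=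
              (ENNReal.ofReal_tsum_of_nonneg
                (fun i => by positivity)
                (((sumsq hE hsum w).summable).mul_left (‖B‖ ^ 2))).symm
            _ = ENNReal.ofReal (‖B‖ ^ 2 * ‖w‖ ^ 2) := by
              rw [tsum_mul_left, (sumsq hE hsum w).tsum_eq]
      have hlower : ∀ n w,
          ENNReal.ofReal (‖B w‖ ^ 2) + n * ENNReal.ofReal (‖C w‖ ^ 2) ≤ a n w := by
        intro n
        induction n with
        | zero => intro w; simp [ha0]
        | succ n ih =>
          intro w
          rw [haS]
          have step1 : ∑' i, (ENNReal.ofReal (‖B (E i w)‖ ^ 2)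
              + n * ENNReal.ofReal (‖C (E i w)‖ ^ 2)) ≤ ∑' i, a n (E i w) :=
            ENNReal.tsum_le_tsum (fun i => ih (E i w))
          have step2 : ∑' i, (ENNReal.ofReal (‖B (E i w)‖ ^ 2)
              + n * ENNReal.ofReal (‖C (E i w)‖ ^ 2))
              = (∑' i, ENNReal.ofReal (‖B (E i w)‖ ^ 2))
              + n * ∑' i, ENNReal.ofReal (‖C (E i w)‖ ^ 2) := by
            rw [ENNReal.tsum_add, ENNReal.tsum_mul_left]
          have hBsum : (∑' i, ENNReal.ofReal (‖B (E i w)‖ ^ 2))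
              = ENNReal.ofReal (∑' i, ‖B (E i w)‖ ^ 2) :=
            (ENNReal.ofReal_tsum_of_nonneg (fun i => sq_nonneg _)
              (summable_op hE hsum B w)).symm
          have hCsum : (∑' i, ENNReal.ofReal (‖C (E i w)‖ ^ 2))
              = ENNReal.ofReal (∑' i, ‖C (E i w)‖ ^ 2) :=
            (ENNReal.ofReal_tsum_of_nonneg (fun i => sq_nonneg _)
              (summable_op hE hsum C w)).symm
          have hBge : ENNReal.ofReal (‖B w‖ ^ 2) + ENNReal.ofReal (‖C w‖ ^ 2)
              ≤ ENNReal.ofReal (∑' i, ‖B (E i w)‖ ^ 2) := by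
            rw [← ENNReal.ofReal_add (sq_nonneg _) (sq_nonneg _)]
            apply ENNReal.ofReal_le_ofReal
            have := star_ge2 hE hsum hB w j
            rwa [← hCapp w] at this
          have hCge : ENNReal.ofReal (‖C w‖ ^ 2)
              ≤ ENNReal.ofReal (∑' i, ‖C (E i w)‖ ^ 2) :=
            ENNReal.ofReal_le_ofReal (star_ge hE hsum hCfix w)
          calc ENNReal.ofReal (‖B w‖ ^ 2) + (↑(n + 1)) * ENNReal.ofReal (‖C w‖ ^ 2)
              = (ENNReal.ofReal (‖B w‖ ^ 2) + ENNReal.ofReal (‖C w‖ ^ 2))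
                + n * ENNReal.ofReal (‖C w‖ ^ 2) := by
                push_cast
                ring
            _ ≤ ENNReal.ofReal (∑' i, ‖B (E i w)‖ ^ 2)
                + n * ENNReal.ofReal (∑' i, ‖C (E i w)‖ ^ 2) := by
                exact add_le_add hBge (mul_le_mul_right hCge _)
            _ = ∑' i, (ENNReal.ofReal (‖B (E i w)‖ ^ 2)
                + n * ENNReal.ofReal (‖C (E i w)‖ ^ 2)) := by
                rw [step2, hBsum, hCsum]
            _ ≤ ∑' i, a n (E i w) := step1
      -- extract : for all n, n * ofReal ‖C v‖^2 ≤ ofReal (‖B‖^2 * ‖v‖^2)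
      have hkey : ∀ n : ℕ, (n : ℝ≥0∞) * ENNReal.ofReal (‖C v‖ ^ 2)
          ≤ ENNReal.ofReal (‖B‖ ^ 2 * ‖v‖ ^ 2) := by
        intro n
        calc (n : ℝ≥0∞) * ENNReal.ofReal (‖C v‖ ^ 2)
            ≤ ENNReal.ofReal (‖B v‖ ^ 2) + n * ENNReal.ofReal (‖C v‖ ^ 2) := le_add_self
          _ ≤ a n v := hlower n v
          _ ≤ ENNReal.ofReal (‖B‖ ^ 2 * ‖v‖ ^ 2) := hupper n v
      by_contra hne
      have hr : 0 < ‖C v‖ ^ 2 := by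
        have h0 : 0 < ‖C v‖ := norm_pos_iff.mpr hne
        positivity
      obtain ⟨n, hn⟩ := exists_nat_gt ((‖B‖ ^ 2 * ‖v‖ ^ 2) / ‖C v‖ ^ 2)
      have h1 : (n : ℝ) * ‖C v‖ ^ 2 ≤ ‖B‖ ^ 2 * ‖v‖ ^ 2 := by
        have := hkey n
        rw [← ENNReal.ofReal_natCast n, ← ENNReal.ofReal_mul (by positivity)] at this
        exact (ENNReal.ofReal_le_ofReal_iff (by positivity)).mp this
      have h2 : (‖B‖ ^ 2 * ‖v‖ ^ 2) / ‖C v‖ ^ 2 < n := hn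
      have : ‖B‖ ^ 2 * ‖v‖ ^ 2 < (n : ℝ) * ‖C v‖ ^ 2 := by
        rw [div_lt_iff₀ hr] at h2
        linarith
      linarith
    apply ContinuousLinearMap.ext
    intro w
    have := hCzero w
    rw [hCapp w, sub_eq_zero] at this
    simp [ContinuousLinearMap.mul_apply, this]
  · intro hB x
    have h1 : HasSum (fun i => B (E i (E i x))) (B x) := B.hasSum (hsum x)
    have heq : (fun i => B (E i (E i x))) = fun i => E i (B (E i x)) := by
      funext i
      have := congrArg (fun T => T (E i x)) (hB i)
      simpa [ContinuousLinearMap.mul_apply] using this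
    rwa [heq] at h1
end

section
/- Let F be a positive contraction on a complex Hilbert space (0 ≤ F ≤ I) and F_q an increasing net/sequence of positive operators with F_q → I in the strong operator topology and F_q ≤ I. Then for any ε > 0, the spectral projections P_q = P^{F_q}((1 − ε, 1]) converge to I in the strong operator topology. -/
namespace SpecAux

variable {H : Type*} [NormedAddCommGroup H] [InnerProductSpace ℂ H] [CompleteSpace H]

local notation "⟪" x ", " y "⟫" => @inner ℂ _ _ x y

lemma inner_le_of_le {f g : H →L[ℂ] H} (h : f ≤ g) (x : H) :
    RCLike.re ⟪f x, x⟫ ≤ RCLike.re ⟪g x, x⟫ := by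
  have h2 := h.2 x
  simp only [ContinuousLinearMap.reApplyInnerSelf, ContinuousLinearMap.sub_apply,
    inner_sub_left, map_sub] at h2
  linarith

lemma sa_move {R : H →L[ℂ] H} (hR : IsSelfAdjoint R) (u v : H) :
    ⟪R u, v⟫ = ⟪u, R v⟫ := by
  nth_rewrite 2 [← ContinuousLinearMap.isSelfAdjoint_iff'.mp hR]
  exact (ContinuousLinearMap.adjoint_inner_right R u v).symm

variable {A : H →L[ℂ] H} {P : Set ℝ → H →L[ℂ] H}

lemma proj_inner (M : IsSpectralMeasure A P) (s : Set ℝ) (x : H) :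
    RCLike.re ⟪P s x, x⟫ = ‖P s x‖ ^ 2 := by
  have h1 : P s (P s x) = P s x := by
    have := DFunLike.congr_fun (M.isIdem s) x
    simpa [ContinuousLinearMap.mul_apply] using this
  rw [← h1, sa_move (M.selfAdj s), ← ContinuousLinearMap.mul_apply, M.isIdem s]
  rw [show ⟪P s x, P s x⟫ = ((‖P s x‖ : ℂ)) ^ 2 from inner_self_eq_norm_sq_to_K _]
  simp [← Complex.ofReal_pow]

lemma triple_inner (M : IsSpectralMeasure A P) (s : Set ℝ) (x : H) :
    RCLike.re ⟪(P s * A * P s) x, x⟫ = RCLike.re ⟪A (P s x), P s x⟫ := by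
  simp only [ContinuousLinearMap.mul_apply]
  rw [sa_move (M.selfAdj s)]

set_option linter.unusedSectionVars false in
lemma smul_inner (a : ℝ) (R : H →L[ℂ] H) (x : H) :
    RCLike.re ⟪((a : ℂ) • R) x, x⟫ = a * RCLike.re ⟪R x, x⟫ := by
  rw [ContinuousLinearMap.smul_apply, inner_smul_left, Complex.conj_ofReal]
  exact Complex.re_ofReal_mul _ _

lemma le_one_inner (hle : A ≤ 1) (y : H) : RCLike.re ⟪A y, y⟫ ≤ ‖y‖ ^ 2 := by
  have := inner_le_of_le hle y
  simpa [inner_self_eq_norm_sq, ← Complex.ofReal_pow] using this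

lemma pos_inner (hpos : 0 ≤ A) (y : H) : 0 ≤ RCLike.re ⟪A y, y⟫ := by
  have := inner_le_of_le hpos y
  simpa using this

lemma zero_of_one_lt (M : IsSpectralMeasure A P) (hle : A ≤ 1) {a b : ℝ} (ha : 1 < a) :
    P (Set.Ioc a b) = 0 := by
  ext x
  have h1 := inner_le_of_le (M.smul_le a b) x
  rw [smul_inner, triple_inner M, proj_inner M] at h1
  have h2 := le_one_inner hle (P (Set.Ioc a b) x)
  have h3 : ‖P (Set.Ioc a b) x‖ ^ 2 = 0 := by nlinarith [sq_nonneg ‖P (Set.Ioc a b) x‖]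
  have := pow_eq_zero_iff (n := 2) (by norm_num) |>.mp h3
  simpa [norm_eq_zero] using this

lemma zero_of_neg (M : IsSpectralMeasure A P) (hpos : 0 ≤ A) {a b : ℝ} (hb : b < 0) :
    P (Set.Ioc a b) = 0 := by
  ext x
  have h1 := inner_le_of_le (M.le_smul a b) x
  rw [smul_inner, triple_inner M, proj_inner M] at h1
  have h2 := pos_inner hpos (P (Set.Ioc a b) x)
  have h3 : ‖P (Set.Ioc a b) x‖ ^ 2 = 0 := by nlinarith [sq_nonneg ‖P (Set.Ioc a b) x‖]
  have := pow_eq_zero_iff (n := 2) (by norm_num) |>.mp h3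
  simpa [norm_eq_zero] using this

lemma pair (M : IsSpectralMeasure A P) {s t : Set ℝ} (hd : Disjoint s t) :
    P (s ∪ t) = P s + P t := by
  ext x
  have hpw : Pairwise (Function.onFun Disjoint
      (fun n => if n = 0 then s else if n = 1 then t else (∅ : Set ℝ))) := by
    intro i j hij
    simp only [Function.onFun]
    rcases i with _ | _ | i <;> rcases j with _ | _ | j <;> simp_all [hd, hd.symm]
  have hU : (⋃ n, (fun n => if n = 0 then s else if n = 1 then t else (∅ : Set ℝ)) n)
      = s ∪ t := by
    apply subset_antisymm
    · exact Set.iUnion_subset fun n => by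
        rcases n with _ | _ | n <;> simp
    · apply Set.union_subset
      · exact Set.subset_iUnion_of_subset 0 (by simp)
      · exact Set.subset_iUnion_of_subset 1 (by simp)
  have h1 := M.hasSum _ hpw x
  rw [hU] at h1
  have h2 : HasSum (fun n => P ((fun n => if n = 0 then s else if n = 1 then t
      else (∅ : Set ℝ)) n) x)
      (∑ n ∈ ({0, 1} : Finset ℕ), P ((fun n => if n = 0 then s else if n = 1 then t
      else (∅ : Set ℝ)) n) x) := by
    apply hasSum_sum_of_ne_finset_zero
    intro b hb
    rcases b with _ | _ | b <;> simp_all [M.empty]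
  rw [Finset.sum_pair (by norm_num)] at h2
  have := h1.unique h2
  simpa using this

lemma zero_iUnion (M : IsSpectralMeasure A P) (f : ℕ → Set ℝ)
    (hpw : Pairwise (Function.onFun Disjoint f)) (hz : ∀ n, P (f n) = 0) :
    P (⋃ n, f n) = 0 := by
  ext x
  have h1 := M.hasSum f hpw x
  have h2 : HasSum (fun n => P (f n) x) 0 := by
    simpa [hz] using hasSum_zero (α := H) (β := ℕ)
  simpa using h1.unique h2

lemma one_div_succ_anti {i j : ℕ} (h : i < j) :
    1 / ((j : ℝ) + 1) ≤ 1 / ((i : ℝ) + 2) := by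
  have h1 : (i : ℝ) + 1 ≤ (j : ℝ) := by exact_mod_cast h
  apply one_div_le_one_div_of_le (by positivity)
  linarith

lemma Ioc_one_two (M : IsSpectralMeasure A P) (hle : A ≤ 1) :
    P (Set.Ioc (1 : ℝ) 2) = 0 := by
  have hU : Set.Ioc (1 : ℝ) 2
      = ⋃ k : ℕ, Set.Ioc (1 + 1 / ((k : ℝ) + 2)) (1 + 1 / ((k : ℝ) + 1)) := by
    ext x
    simp only [Set.mem_iUnion, Set.mem_Ioc]
    constructor
    · rintro ⟨hx1, hx2⟩
      have ht0 : 0 < x - 1 := by linarith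
      have hm1 : (1 : ℝ) ≤ 1 / (x - 1) := by rw [le_div_iff₀ ht0]; linarith
      have hmge : 1 ≤ Nat.floor (1 / (x - 1)) := Nat.le_floor (by exact_mod_cast hm1)
      have hcast : ((Nat.floor (1 / (x - 1)) - 1 : ℕ) : ℝ)
          = (Nat.floor (1 / (x - 1)) : ℝ) - 1 := by
        push_cast [hmge]; ring
      have hmR : (1 : ℝ) ≤ (Nat.floor (1 / (x - 1)) : ℝ) := by exact_mod_cast hmge
      refine ⟨Nat.floor (1 / (x - 1)) - 1, ?_, ?_⟩
      · rw [hcast]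
        have h2 := Nat.lt_floor_add_one (1 / (x - 1))
        rw [div_lt_iff₀ ht0] at h2
        have h3 : 1 / ((Nat.floor (1 / (x - 1)) : ℝ) - 1 + 2) < x - 1 := by
          rw [div_lt_iff₀ (by linarith)]
          nlinarith
        linarith
      · rw [hcast]
        have hfl : (Nat.floor (1 / (x - 1)) : ℝ) ≤ 1 / (x - 1) :=
          Nat.floor_le (by positivity)
        rw [le_div_iff₀ ht0] at hfl
        have h3 : x - 1 ≤ 1 / ((Nat.floor (1 / (x - 1)) : ℝ) - 1 + 1) := by
          rw [le_div_iff₀ (by linarith)]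
          nlinarith
        linarith
    · rintro ⟨k, hk1, hk2⟩
      have hk2pos : (0 : ℝ) < (k : ℝ) + 2 := by positivity
      have hk1pos : (0 : ℝ) < (k : ℝ) + 1 := by positivity
      constructor
      · have h : (0 : ℝ) < 1 / ((k : ℝ) + 2) := by positivity
        linarith
      · have h : 1 / ((k : ℝ) + 1) ≤ 1 := by
          rw [div_le_one hk1pos]
          have := Nat.cast_nonneg (α := ℝ) k
          linarith
        linarith
  rw [hU]
  apply zero_iUnion M
  · intro i j hij
    simp only [Function.onFun]
    rw [Set.Ioc_disjoint_Ioc]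
    rcases hij.lt_or_gt with h | h
    · calc min (1 + 1 / ((i : ℝ) + 1)) (1 + 1 / ((j : ℝ) + 1))
          ≤ 1 + 1 / ((j : ℝ) + 1) := min_le_right _ _
        _ ≤ 1 + 1 / ((i : ℝ) + 2) := by linarith [one_div_succ_anti h]
        _ ≤ max (1 + 1 / ((i : ℝ) + 2)) (1 + 1 / ((j : ℝ) + 2)) := le_max_left _ _
    · calc min (1 + 1 / ((i : ℝ) + 1)) (1 + 1 / ((j : ℝ) + 1))
          ≤ 1 + 1 / ((i : ℝ) + 1) := min_le_left _ _
        _ ≤ 1 + 1 / ((j : ℝ) + 2) := by linarith [one_div_succ_anti h]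
        _ ≤ max (1 + 1 / ((i : ℝ) + 2)) (1 + 1 / ((j : ℝ) + 2)) := le_max_right _ _
  · intro k
    apply zero_of_one_lt M hle
    have : (0 : ℝ) < 1 / ((k : ℝ) + 2) := by positivity
    linarith

lemma Ioi_one (M : IsSpectralMeasure A P) (hle : A ≤ 1) :
    P (Set.Ioi (1 : ℝ)) = 0 := by
  have hU : Set.Ioi (1 : ℝ) = ⋃ k : ℕ, Set.Ioc (1 + (k : ℝ)) (2 + (k : ℝ)) := by
    ext x
    simp only [Set.mem_iUnion, Set.mem_Ioc, Set.mem_Ioi]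
    constructor
    · intro hx1
      have ht0 : 0 < x - 1 := by linarith
      have hmge : 1 ≤ Nat.ceil (x - 1) := Nat.one_le_ceil_iff.mpr ht0
      have hcast : ((Nat.ceil (x - 1) - 1 : ℕ) : ℝ) = (Nat.ceil (x - 1) : ℝ) - 1 := by
        push_cast [hmge]; ring
      refine ⟨Nat.ceil (x - 1) - 1, ?_, ?_⟩
      · rw [hcast]
        have := Nat.ceil_lt_add_one (le_of_lt ht0)
        linarith
      · rw [hcast]
        have := Nat.le_ceil (x - 1)
        linarith
    · rintro ⟨k, hk1, _⟩
      have := Nat.cast_nonneg (α := ℝ) k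
      linarith
  rw [hU]
  apply zero_iUnion M
  · intro i j hij
    simp only [Function.onFun]
    rw [Set.Ioc_disjoint_Ioc]
    rcases hij.lt_or_gt with h | h
    · have h1 : (i : ℝ) + 1 ≤ (j : ℝ) := by exact_mod_cast h
      calc min (2 + (i : ℝ)) (2 + (j : ℝ)) ≤ 2 + (i : ℝ) := min_le_left _ _
        _ ≤ 1 + (j : ℝ) := by linarith
        _ ≤ max (1 + (i : ℝ)) (1 + (j : ℝ)) := le_max_right _ _
    · have h1 : (j : ℝ) + 1 ≤ (i : ℝ) := by exact_mod_cast h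
      calc min (2 + (i : ℝ)) (2 + (j : ℝ)) ≤ 2 + (j : ℝ) := min_le_right _ _
        _ ≤ 1 + (i : ℝ) := by linarith
        _ ≤ max (1 + (i : ℝ)) (1 + (j : ℝ)) := le_max_left _ _
  · intro k
    match k with
    | 0 => simpa using Ioc_one_two M hle
    | (k + 1) =>
      apply zero_of_one_lt M hle
      have := Nat.cast_nonneg (α := ℝ) k
      push_cast
      linarith

lemma Iic_neg_one (M : IsSpectralMeasure A P) (hpos : 0 ≤ A) :
    P (Set.Iic (-1 : ℝ)) = 0 := by
  have hU : Set.Iic (-1 : ℝ) = ⋃ k : ℕ, Set.Ioc (-2 - (k : ℝ)) (-1 - (k : ℝ)) := by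
    ext x
    simp only [Set.mem_iUnion, Set.mem_Ioc, Set.mem_Iic]
    constructor
    · intro hx1
      have ht0 : 0 ≤ -1 - x := by linarith
      refine ⟨Nat.floor (-1 - x), ?_, ?_⟩
      · have := Nat.lt_floor_add_one (-1 - x)
        linarith
      · have := Nat.floor_le ht0
        linarith
    · rintro ⟨k, _, hk2⟩
      have := Nat.cast_nonneg (α := ℝ) k
      linarith
  rw [hU]
  apply zero_iUnion M
  · intro i j hij
    simp only [Function.onFun]
    rw [Set.Ioc_disjoint_Ioc]
    rcases hij.lt_or_gt with h | h
    · have h1 : (i : ℝ) + 1 ≤ (j : ℝ) := by exact_mod_cast h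
      calc min (-1 - (i : ℝ)) (-1 - (j : ℝ)) ≤ -1 - (j : ℝ) := min_le_right _ _
        _ ≤ -2 - (i : ℝ) := by linarith
        _ ≤ max (-2 - (i : ℝ)) (-2 - (j : ℝ)) := le_max_left _ _
    · have h1 : (j : ℝ) + 1 ≤ (i : ℝ) := by exact_mod_cast h
      calc min (-1 - (i : ℝ)) (-1 - (j : ℝ)) ≤ -1 - (i : ℝ) := min_le_left _ _
        _ ≤ -2 - (j : ℝ) := by linarith
        _ ≤ max (-2 - (i : ℝ)) (-2 - (j : ℝ)) := le_max_right _ _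
  · intro k
    apply zero_of_neg M hpos
    have := Nat.cast_nonneg (α := ℝ) k
    linarith

lemma comm_apply (M : IsSpectralMeasure A P) (s : Set ℝ) (y : H) :
    P s (A y) = A (P s y) := by
  have h1 := DFunLike.congr_fun (M.commutes s) y
  simpa [ContinuousLinearMap.mul_apply] using h1.symm

lemma split (M : IsSpectralMeasure A P) (hpos : 0 ≤ A) (hle : A ≤ 1) {δ : ℝ}
    (hδ0 : -1 < δ) (hδ1 : δ ≤ 1) (x : H) :
    x = P (Set.Ioc δ 1) x + P (Set.Ioc (-1 : ℝ) δ) x := by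
  have h1 : Set.Ioc (-1 : ℝ) δ ∪ Set.Ioc δ 1 = Set.Ioc (-1 : ℝ) 1 :=
    Set.Ioc_union_Ioc_eq_Ioc (le_of_lt hδ0) hδ1
  have hd1 : Disjoint (Set.Ioc (-1 : ℝ) δ) (Set.Ioc δ 1) := (Set.Ioc_disjoint_Ioc_of_le le_rfl)
  have hd2 : Disjoint (Set.Iic (-1 : ℝ)) (Set.Ioi (1 : ℝ)) := by
    rw [Set.disjoint_left]
    intro a ha ha'
    simp only [Set.mem_Iic, Set.mem_Ioi] at ha ha'
    linarith
  have hd3 : Disjoint (Set.Ioc (-1 : ℝ) 1) (Set.Iic (-1 : ℝ) ∪ Set.Ioi (1 : ℝ)) := by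
    rw [Set.disjoint_left]
    rintro a ⟨ha1, ha2⟩ (ha' | ha') <;>
      simp only [Set.mem_Iic, Set.mem_Ioi] at ha' <;> linarith
  have hU : Set.Ioc (-1 : ℝ) 1 ∪ (Set.Iic (-1 : ℝ) ∪ Set.Ioi (1 : ℝ)) = Set.univ := by
    ext a
    simp only [Set.mem_union, Set.mem_Ioc, Set.mem_Iic, Set.mem_Ioi, Set.mem_univ, iff_true]
    rcases le_or_gt a (-1) with h | h
    · tauto
    · rcases le_or_gt a 1 with h' | h' <;> tauto
  have hz : P (Set.Iic (-1 : ℝ) ∪ Set.Ioi (1 : ℝ)) = 0 := by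
    rw [pair M hd2, Iic_neg_one M hpos, Ioi_one M hle, add_zero]
  have hPuniv : P Set.univ = P (Set.Ioc (-1 : ℝ) δ) + P (Set.Ioc δ 1) := by
    rw [← hU, pair M hd3, hz, add_zero, ← h1, pair M hd1]
  have := DFunLike.congr_fun hPuniv x
  rw [M.univ] at this
  simpa [add_comm] using this

lemma inter_empty_apply (M : IsSpectralMeasure A P) {s t : Set ℝ} (h : s ∩ t = ∅)
    (y : H) : P s (P t y) = 0 := by
  have h1 := DFunLike.congr_fun (M.inter s t) y
  rw [h, M.empty] at h1
  simpa [ContinuousLinearMap.mul_apply] using h1.symm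

lemma key (M : IsSpectralMeasure A P) (hpos : 0 ≤ A) (hle : A ≤ 1) {δ : ℝ}
    (hδ0 : 0 < δ) (hδ1 : δ < 1) (x : H) :
    ‖x - P (Set.Ioc δ 1) x‖ ^ 2 * (1 - δ) ≤ ‖x - A x‖ * ‖x‖ := by
  have hx : x = P (Set.Ioc δ 1) x + P (Set.Ioc (-1 : ℝ) δ) x :=
    split M hpos hle (by linarith) (le_of_lt hδ1) x
  set p := P (Set.Ioc δ 1) x with hp
  set s := P (Set.Ioc (-1 : ℝ) δ) x with hs
  have hes : Set.Ioc (-1 : ℝ) δ ∩ Set.Ioc δ 1 = ∅ := by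
    ext a; simp only [Set.mem_inter_iff, Set.mem_Ioc, Set.mem_empty_iff_false, iff_false]
    rintro ⟨⟨_, h2⟩, h3, _⟩; linarith
  have hes' : Set.Ioc δ 1 ∩ Set.Ioc (-1 : ℝ) δ = ∅ := by
    rw [Set.inter_comm]; exact hes
  have hsp : P (Set.Ioc (-1 : ℝ) δ) p = 0 := inter_empty_apply M hes x
  have hps : P (Set.Ioc δ 1) s = 0 := inter_empty_apply M hes' x
  -- cross terms vanish
  have hc1 : ⟪A p, s⟫ = 0 := by
    rw [hs, ← sa_move (M.selfAdj _), comm_apply M, hsp, map_zero, inner_zero_left]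
  have hc2 : ⟪A s, p⟫ = 0 := by
    rw [hp, ← sa_move (M.selfAdj _), comm_apply M, hps, map_zero, inner_zero_left]
  have horth : ⟪p, s⟫ = 0 := by
    rw [hs, ← sa_move (M.selfAdj _), hsp, inner_zero_left]
  -- inner product bounds
  have hAp : RCLike.re ⟪A p, p⟫ ≤ ‖p‖ ^ 2 := le_one_inner hle p
  have hAs : RCLike.re ⟪A s, s⟫ ≤ δ * ‖s‖ ^ 2 := by
    have h1 := inner_le_of_le (M.le_smul (-1 : ℝ) δ) x
    rw [smul_inner, triple_inner M, proj_inner M] at h1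
    exact h1
  have hAx : RCLike.re ⟪A x, x⟫ = RCLike.re ⟪A p, p⟫ + RCLike.re ⟪A s, s⟫ := by
    nth_rewrite 1 [hx]
    nth_rewrite 1 [hx]
    rw [map_add, inner_add_left, inner_add_right, inner_add_right, hc1, hc2]
    simp
  have hnorm : ‖x‖ ^ 2 = ‖p‖ ^ 2 + ‖s‖ ^ 2 := by
    nth_rewrite 1 [hx]
    rw [norm_add_sq (𝕜 := ℂ), horth]
    simp
  have hlow : ‖s‖ ^ 2 * (1 - δ) ≤ RCLike.re ⟪x - A x, x⟫ := by
    rw [inner_sub_left, map_sub, inner_self_eq_norm_sq]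
    nlinarith
  have hup : RCLike.re ⟪x - A x, x⟫ ≤ ‖x - A x‖ * ‖x‖ := re_inner_le_norm _ _
  have hxps : x - p = s := by rw [hx]; abel
  rw [hxps]
  linarith

lemma proj_norm_sub (M : IsSpectralMeasure A P) (s : Set ℝ) (x : H) :
    ‖x - P s x‖ ^ 2 = ‖x‖ ^ 2 - ‖P s x‖ ^ 2 := by
  rw [norm_sub_sq (𝕜 := ℂ), inner_re_symm, proj_inner M]
  ring

lemma mono_norm (M : IsSpectralMeasure A P) {a c : ℝ} (hac : a ≤ c) (hc1 : c ≤ 1) (x : H) :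
    ‖x - P (Set.Ioc a 1) x‖ ≤ ‖x - P (Set.Ioc c 1) x‖ := by
  have hsplitset : Set.Ioc a c ∪ Set.Ioc c 1 = Set.Ioc a 1 :=
    Set.Ioc_union_Ioc_eq_Ioc hac hc1
  have hadd : P (Set.Ioc a 1) x = P (Set.Ioc a c) x + P (Set.Ioc c 1) x := by
    rw [← hsplitset, pair M (Set.Ioc_disjoint_Ioc_of_le le_rfl)]; rfl
  have hes : Set.Ioc c 1 ∩ Set.Ioc a c = ∅ := by
    ext t; simp only [Set.mem_inter_iff, Set.mem_Ioc, Set.mem_empty_iff_false, iff_false]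
    rintro ⟨⟨h1, _⟩, _, h2⟩; linarith
  have horth : ⟪P (Set.Ioc a c) x, P (Set.Ioc c 1) x⟫ = 0 := by
    rw [← sa_move (M.selfAdj _), inter_empty_apply M hes, inner_zero_left]
  have hnorm : ‖P (Set.Ioc a 1) x‖ ^ 2
      = ‖P (Set.Ioc a c) x‖ ^ 2 + ‖P (Set.Ioc c 1) x‖ ^ 2 := by
    rw [hadd, norm_add_sq (𝕜 := ℂ), horth]
    simp
  have h2 : ‖x - P (Set.Ioc a 1) x‖ ^ 2 ≤ ‖x - P (Set.Ioc c 1) x‖ ^ 2 := by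
    rw [proj_norm_sub M, proj_norm_sub M]
    nlinarith [sq_nonneg ‖P (Set.Ioc a c) x‖]
  have := Real.sqrt_le_sqrt h2
  rwa [Real.sqrt_sq (norm_nonneg _), Real.sqrt_sq (norm_nonneg _)] at this

end SpecAux

open Filter in
/-- If positive contractions `F_q` increase strongly to the identity, the spectral
projections `P_q = P^{F_q}((1-ε,1])` converge strongly to the identity. -/
theorem spectral_proj_tendsto_one {H : Type*} [NormedAddCommGroup H]
    [InnerProductSpace ℂ H] [CompleteSpace H]
    (F : H →L[ℂ] H) (hFpos : 0 ≤ F) (hFle : F ≤ 1)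
    (Fq : ℕ → H →L[ℂ] H) (hmono : Monotone Fq)
    (hpos : ∀ q, 0 ≤ Fq q) (hle : ∀ q, Fq q ≤ 1)
    (htends : ∀ x : H, Filter.Tendsto (fun q => Fq q x) Filter.atTop (nhds x))
    (P : ℕ → Set ℝ → H →L[ℂ] H) (hP : ∀ q, IsSpectralMeasure (Fq q) (P q))
    (ε : ℝ) (hε : 0 < ε) :
    ∀ x : H, Filter.Tendsto (fun q => P q (Set.Ioc (1 - ε) 1) x) Filter.atTop (nhds x) := by
  intro x
  set ε' := min ε (1 / 2) with hε'
  have hε'pos : 0 < ε' := lt_min hε (by norm_num)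
  have hε'le : ε' ≤ 1 / 2 := min_le_right _ _
  have hδ0 : (0 : ℝ) < 1 - ε' := by linarith
  have hδ1 : 1 - ε' < 1 := by linarith
  have hbound : ∀ q, ‖x - P q (Set.Ioc (1 - ε) 1) x‖ ^ 2 ≤ ‖x - Fq q x‖ * ‖x‖ / ε' := by
    intro q
    have h1 := SpecAux.key (hP q) (hpos q) (hle q) hδ0 hδ1 x
    have h1' : ‖x - P q (Set.Ioc (1 - ε') 1) x‖ ^ 2 * ε' ≤ ‖x - Fq q x‖ * ‖x‖ := by
      have heq : (1 : ℝ) - (1 - ε') = ε' := by ring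
      rwa [heq] at h1
    have h2 : ‖x - P q (Set.Ioc (1 - ε) 1) x‖ ≤ ‖x - P q (Set.Ioc (1 - ε') 1) x‖ :=
      SpecAux.mono_norm (hP q) (by linarith [min_le_left ε (1 / 2 : ℝ)]) (by linarith) x
    have h3 : ‖x - P q (Set.Ioc (1 - ε) 1) x‖ ^ 2
        ≤ ‖x - P q (Set.Ioc (1 - ε') 1) x‖ ^ 2 :=
      pow_le_pow_left₀ (norm_nonneg _) h2 2
    rw [le_div_iff₀ hε'pos]
    calc ‖x - P q (Set.Ioc (1 - ε) 1) x‖ ^ 2 * ε'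
        ≤ ‖x - P q (Set.Ioc (1 - ε') 1) x‖ ^ 2 * ε' := by
          exact mul_le_mul_of_nonneg_right h3 hε'pos.le
      _ ≤ ‖x - Fq q x‖ * ‖x‖ := h1'
  have hzero : Tendsto (fun q => ‖x - Fq q x‖ * ‖x‖ / ε') atTop (nhds 0) := by
    have h1 : Tendsto (fun q => ‖Fq q x - x‖) atTop (nhds 0) :=
      tendsto_iff_norm_sub_tendsto_zero.mp (htends x)
    have h1' : Tendsto (fun q => ‖x - Fq q x‖) atTop (nhds 0) := by
      simpa [norm_sub_rev] using h1
    have := (h1'.mul_const ‖x‖).div_const ε'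
    simpa using this
  have hsq : Tendsto (fun q => Real.sqrt (‖x - Fq q x‖ * ‖x‖ / ε')) atTop (nhds 0) := by
    have := (Real.continuous_sqrt.tendsto 0).comp hzero
    simpa [Function.comp_def] using this
  rw [tendsto_iff_norm_sub_tendsto_zero]
  apply squeeze_zero (fun q => norm_nonneg _) _ hsq
  intro q
  rw [norm_sub_rev]
  rw [show ‖x - P q (Set.Ioc (1 - ε) 1) x‖
      = Real.sqrt (‖x - P q (Set.Ioc (1 - ε) 1) x‖ ^ 2) from
    (Real.sqrt_sq (norm_nonneg _)).symm]
  exact Real.sqrt_le_sqrt (hbound q)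
end

section
/- Let E₁,...,E_n be pairwise commuting effects with F = ∑ E_i² ≤ I and let P = P^F({1}). If B ∈ B(H) commutes with all E_i and PB = B, then B is a fixed point of Φ_A: ∑_i E_i B E_i = B. -/
open scoped InnerProductSpace
private lemma conj_le_conj' {H : Type*} [NormedAddCommGroup H] [InnerProductSpace ℂ H]
    [CompleteSpace H] {Q S T : H →L[ℂ] H} (hQ : IsSelfAdjoint Q) (h : S ≤ T) :
    Q*S*Q ≤ Q*T*Q := by
  rw [ContinuousLinearMap.le_def] at h ⊢
  have h2 := h.adjoint_conj Q
  rw [hQ.adjoint_eq] at h2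
  have heq : Q*T*Q - Q*S*Q = Q ∘L (T - S) ∘L Q := by
    ext x; simp [mul_sub, sub_mul, ContinuousLinearMap.mul_apply]
  rw [heq]; exact h2

private lemma key_proj' {H : Type*} [NormedAddCommGroup H] [InnerProductSpace ℂ H]
    [CompleteSpace H] {A Q : H →L[ℂ] H}
    (hle : ∀ a : ℝ, a < 1 → (a : ℂ) • Q ≤ Q * A * Q) (hge : Q * A * Q ≤ Q) :
    Q * A * Q = Q := by
  set T := Q - Q * A * Q with hT
  have hTpos : T.IsPositive := (ContinuousLinearMap.le_def _ _).mp hge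
  have hQpos : (0 : H →L[ℂ] H) ≤ Q :=
    le_trans (by simpa using hle 0 one_pos) hge
  have hzero : ∀ x : H, ⟪T x, x⟫_ℂ = 0 := by
    intro x
    have hre : Complex.re ⟪T x, x⟫_ℂ ≤ 0 := by
      set C := Complex.re ⟪Q x, x⟫_ℂ with hC
      have hCnn : 0 ≤ C := by
        simpa using ((ContinuousLinearMap.le_def _ _).mp hQpos).re_inner_nonneg_left x
      refine le_of_forall_pos_le_add (fun ε hε => ?_)
      set a : ℝ := 1 - ε / (C + 1) with haa
      have hεC1 : 0 < ε / (C + 1) := div_pos hε (by linarith)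
      have ha : a < 1 := by rw [haa]; linarith
      have h1 := (ContinuousLinearMap.le_def _ _).mp (hle a ha)
      have h2 := h1.re_inner_nonneg_left x
      simp only [RCLike.re_to_complex] at h2
      have hrw : Complex.re ⟪(Q * A * Q - (a : ℂ) • Q) x, x⟫_ℂ
          = Complex.re ⟪(Q * A * Q) x, x⟫_ℂ - a * C := by
        simp only [ContinuousLinearMap.sub_apply, inner_sub_left,
          ContinuousLinearMap.smul_apply, inner_smul_left, Complex.conj_ofReal,
          Complex.sub_re, Complex.mul_re, Complex.ofReal_re, Complex.ofReal_im, hC]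
        ring
      rw [hrw] at h2
      have hTre : Complex.re ⟪T x, x⟫_ℂ
          = C - Complex.re ⟪(Q * A * Q) x, x⟫_ℂ := by
        simp [hT, ContinuousLinearMap.sub_apply, inner_sub_left, hC]
      rw [hTre]
      have hεC : ε / (C + 1) * C ≤ ε := by
        rw [div_mul_eq_mul_div, div_le_iff₀ (by linarith)]
        nlinarith
      rw [haa] at h2
      nlinarith
    have him : (Complex.re ⟪T x, x⟫_ℂ : ℂ) = ⟪T x, x⟫_ℂ :=
      ((ContinuousLinearMap.isPositive_iff_complex T).mp hTpos x).1
    have h0 : Complex.re ⟪T x, x⟫_ℂ = 0 := le_antisymm hre (hTpos.re_inner_nonneg_left x)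
    rw [← him, h0]; norm_num
  have hlin : (T : H →ₗ[ℂ] H) = 0 := (inner_map_self_eq_zero _).mp hzero
  have hT0 : T = 0 := by
    ext x
    have := congrFun (congrArg DFunLike.coe hlin) x
    simpa using this
  exact (sub_eq_zero.mp hT0).symm



/-- If `B` commutes with all `Eᵢ` and `P^F({1}) B = B` where `F = ∑ Eᵢ² ≤ I`, then `B` is
a fixed point of the Lüders operation. -/
theorem fixedPoint_of_commutes_and_proj {H : Type*} [NormedAddCommGroup H]
    [InnerProductSpace ℂ H] [CompleteSpace H] {n : ℕ}
    (E : Fin n → H →L[ℂ] H)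
    (heff : ∀ i, 0 ≤ E i ∧ E i ≤ 1)
    (hcomm : ∀ i j, E i * E j = E j * E i)
    (hsum : ∑ i, E i * E i ≤ 1)
    (PF : Set ℝ → H →L[ℂ] H) (hPF : IsSpectralMeasure (∑ i, E i * E i) PF)
    (B : H →L[ℂ] H) (hBc : ∀ i, B * E i = E i * B)
    (hPB : PF {1} * B = B) :
    ∑ i, E i * B * E i = B := by
  set A : H →L[ℂ] H := ∑ i, E i * E i with hA
  set Q : H →L[ℂ] H := PF {1} with hQ
  have hQQ : Q * Q = Q := hPF.isIdem {1}
  -- interval facts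
  have hQs : ∀ a : ℝ, a < 1 → Q * PF (Set.Ioc a 1) = Q := by
    intro a ha
    have h1 : ({1} : Set ℝ) ∩ Set.Ioc a 1 = {1} := by
      rw [Set.inter_eq_left]
      exact Set.singleton_subset_iff.mpr ⟨ha, le_refl 1⟩
    rw [hQ, ← hPF.inter, h1]
  have hsQ : ∀ a : ℝ, a < 1 → PF (Set.Ioc a 1) * Q = Q := by
    intro a ha
    have h1 : Set.Ioc a 1 ∩ ({1} : Set ℝ) = {1} := by
      rw [Set.inter_eq_right]
      exact Set.singleton_subset_iff.mpr ⟨ha, le_refl 1⟩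
    rw [hQ, ← hPF.inter, h1]
  -- squeeze
  have hle : ∀ a : ℝ, a < 1 → (a : ℂ) • Q ≤ Q * A * Q := by
    intro a ha
    have h := conj_le_conj' (hPF.selfAdj {1}) (hPF.smul_le a 1)
    rw [← hQ] at h
    have e1 : Q * ((a : ℂ) • PF (Set.Ioc a 1)) * Q = (a : ℂ) • Q := by
      rw [mul_smul_comm, smul_mul_assoc, hQs a ha, hQQ]
    have e2 : Q * (PF (Set.Ioc a 1) * A * PF (Set.Ioc a 1)) * Q = Q * A * Q := by
      have : Q * (PF (Set.Ioc a 1) * A * PF (Set.Ioc a 1)) * Q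
          = (Q * PF (Set.Ioc a 1)) * A * (PF (Set.Ioc a 1) * Q) := by
        simp only [mul_assoc]
      rw [this, hQs a ha, hsQ a ha]
    rw [e1, e2] at h
    exact h
  have hge : Q * A * Q ≤ Q := by
    have h := conj_le_conj' (hPF.selfAdj {1}) (hPF.le_smul 0 1)
    rw [← hQ] at h
    have e2 : Q * (PF (Set.Ioc 0 1) * A * PF (Set.Ioc 0 1)) * Q = Q * A * Q := by
      have : Q * (PF (Set.Ioc 0 1) * A * PF (Set.Ioc 0 1)) * Q
          = (Q * PF (Set.Ioc 0 1)) * A * (PF (Set.Ioc 0 1) * Q) := by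
        simp only [mul_assoc]
      rw [this, hQs 0 one_pos, hsQ 0 one_pos]
    have e1 : Q * (((1 : ℝ) : ℂ) • PF (Set.Ioc 0 1)) * Q = Q := by
      rw [Complex.ofReal_one, one_smul]
      have : Q * PF (Set.Ioc 0 1) * Q = (Q * PF (Set.Ioc 0 1)) * Q := rfl
      rw [this, hQs 0 one_pos, hQQ]
    rw [e1, e2] at h
    exact h
  have hQAQ : Q * A * Q = Q := key_proj' hle hge
  have hAQ : A * Q = Q := by
    calc A * Q = A * (Q * Q) := by rw [hQQ]
      _ = A * Q * Q := by rw [mul_assoc]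
      _ = Q * A * Q := by rw [hPF.commutes {1}, ← hQ]
      _ = Q := hQAQ
  have hterm : ∀ i, B * (E i * E i) = E i * E i * B := by
    intro i
    calc B * (E i * E i) = B * E i * E i := by rw [mul_assoc]
      _ = E i * B * E i := by rw [hBc i]
      _ = E i * (B * E i) := by rw [mul_assoc]
      _ = E i * (E i * B) := by rw [hBc i]
      _ = E i * E i * B := by rw [mul_assoc]
  have hBA : B * A = A * B := by
    rw [hA, Finset.mul_sum, Finset.sum_mul]
    exact Finset.sum_congr rfl fun i _ => hterm i
  calc ∑ i, E i * B * E i = ∑ i, B * (E i * E i) := by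
        refine Finset.sum_congr rfl fun i _ => ?_
        rw [← hBc i, mul_assoc]
    _ = B * A := by rw [hA, Finset.mul_sum]
    _ = A * B := hBA
    _ = A * (Q * B) := by rw [hQ, hPB]
    _ = A * Q * B := by rw [mul_assoc]
    _ = Q * B := by rw [hAQ]
    _ = B := by rw [hQ, hPB]
end
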